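/- Assume moreover that U+G < T. Then both value functions s ↦ V_mu(s) and s ↦ V_un(s) are strictly increasing and continuous on [0,P]. -/

import Mathlib

open Finset

noncomputable section

/-- Effective estimation quality `ξ_{jk} = τ q_{jk}^{up} η_{jk}² / (1 + Σ_t τ q_{jt}^{up} η_{jt})`. -/
def xiX {G : ℕ} {K : Fin G → ℕ} (η : ∀ j : Fin G, Fin (K j) → ℝ)
    (τ : ℕ) (qup : ∀ j : Fin G, Fin (K j) → ℝ) (j : Fin G) (k : Fin (K j)) : ℝ :=
  (τ : ℝ) * qup j k * (η j k) ^ 2 / (1 + ∑ t, (τ : ℝ) * qup j t * η j t)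

/-- Effective estimation quality `θ_m = τ p_m^{up} β_m² / (1 + τ p_m^{up} β_m)`. -/
def thetaX {U : ℕ} (β : Fin U → ℝ) (τ : ℕ) (pup : Fin U → ℝ) (m : Fin U) : ℝ :=
  (τ : ℝ) * pup m * (β m) ^ 2 / (1 + (τ : ℝ) * pup m * β m)

/-- The multicast objective
`O_mu(x) = (1-τ/T) log₂(1 + min_{j,k} N q_j^{dl} ξ_{jk} / (1 + η_{jk}(P_un+P_mu)))`. -/
def OmuX {U G : ℕ} {K : Fin G → ℕ} (N T : ℕ) (η : ∀ j : Fin G, Fin (K j) → ℝ)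
    (τ : ℕ) (qup : ∀ j : Fin G, Fin (K j) → ℝ) (qdl : Fin G → ℝ) (pdl : Fin U → ℝ) : ℝ :=
  (1 - (τ : ℝ) / (T : ℝ)) * Real.logb 2 (1 + ⨅ j : Fin G, ⨅ k : Fin (K j),
    (N : ℝ) * qdl j * xiX η τ qup j k / (1 + η j k * (∑ m, pdl m + ∑ i, qdl i)))

/-- The unicast objective
`O_un(x) = (1-τ/T) Σ_m α_m log₂(1 + N p_m^{dl} θ_m / (1 + β_m (P_un+P_mu)))`. -/
def OunX {U G : ℕ} (N T : ℕ) (β α : Fin U → ℝ)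
    (τ : ℕ) (pup pdl : Fin U → ℝ) (qdl : Fin G → ℝ) : ℝ :=
  (1 - (τ : ℝ) / (T : ℝ)) * ∑ m, α m * Real.logb 2 (1 +
    (N : ℝ) * pdl m * thetaX β τ pup m / (1 + β m * (∑ u, pdl u + ∑ j, qdl j)))

/-- The feasible set (resource bundle) `X` of the multiobjective problem. -/
def feasX {U G : ℕ} {K : Fin G → ℕ} (T : ℕ) (P : ℝ)
    (Emu : ∀ j : Fin G, Fin (K j) → ℝ) (Eun : Fin U → ℝ) (τ : ℕ)
    (qup : ∀ j : Fin G, Fin (K j) → ℝ) (qdl : Fin G → ℝ) (pup pdl : Fin U → ℝ) : Prop :=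
  U + G ≤ τ ∧ τ ≤ T ∧
    (∀ j, 0 ≤ qdl j) ∧ (∀ m, 0 ≤ pdl m) ∧
    (∀ j k, 0 ≤ qup j k ∧ (τ : ℝ) * qup j k ≤ Emu j k) ∧
    (∀ m, 0 ≤ pup m ∧ (τ : ℝ) * pup m ≤ Eun m) ∧
    ∑ m, pdl m + ∑ j, qdl j ≤ P

/-- The attainable objective set `S = {(O_mu(x), O_un(x)) : x ∈ X} ⊆ ℝ²`. -/
def attainS {U G : ℕ} {K : Fin G → ℕ} (N T : ℕ) (P : ℝ)
    (η Emu : ∀ j : Fin G, Fin (K j) → ℝ) (β Eun α : Fin U → ℝ) : Set (ℝ × ℝ) :=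
  {y | ∃ (τ : ℕ) (qup : ∀ j : Fin G, Fin (K j) → ℝ) (qdl : Fin G → ℝ)
      (pup pdl : Fin U → ℝ),
    feasX T P Emu Eun τ qup qdl pup pdl ∧
    y = (OmuX N T η τ qup qdl pdl, OunX N T β α τ pup pdl qdl)}

/-- The multicast value function `V_mu(s)`: the best multicast objective when the
multicast downlink power is at most `s` and the unicast downlink power equals `P - s`. -/
def VmuX {U G : ℕ} {K : Fin G → ℕ} (N T : ℕ) (P : ℝ)
    (η Emu : ∀ j : Fin G, Fin (K j) → ℝ) (β Eun α : Fin U → ℝ) (s : ℝ) : ℝ :=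
  sSup {v : ℝ | ∃ (τ : ℕ) (qup : ∀ j : Fin G, Fin (K j) → ℝ) (qdl : Fin G → ℝ)
      (pup pdl : Fin U → ℝ),
    feasX T P Emu Eun τ qup qdl pup pdl ∧
    (∑ j, qdl j ≤ s) ∧ (∑ m, pdl m = P - s) ∧
    v = OmuX N T η τ qup qdl pdl}

/-- The unicast value function `V_un(s)`: the best unicast objective when the unicast
downlink power is at most `s` and the multicast downlink power equals `P - s`. -/
def VunX {U G : ℕ} {K : Fin G → ℕ} (N T : ℕ) (P : ℝ)
    (η Emu : ∀ j : Fin G, Fin (K j) → ℝ) (β Eun α : Fin U → ℝ) (s : ℝ) : ℝ :=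
  sSup {v : ℝ | ∃ (τ : ℕ) (qup : ∀ j : Fin G, Fin (K j) → ℝ) (qdl : Fin G → ℝ)
      (pup pdl : Fin U → ℝ),
    feasX T P Emu Eun τ qup qdl pup pdl ∧
    (∑ m, pdl m ≤ s) ∧ (∑ j, qdl j = P - s) ∧
    v = OunX N T β α τ pup pdl qdl}

section helpers

lemma logb2_le_two_mul {t : ℝ} (ht : 1 ≤ t) : Real.logb 2 t ≤ 2*(t-1) := by
  have h2 : (0.6931471803 : ℝ) < Real.log 2 := Real.log_two_gt_d9
  have hl : Real.log t ≤ t - 1 := Real.log_le_sub_one_of_pos (by linarith)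
  have hln : 0 ≤ Real.log t := Real.log_nonneg ht
  rw [Real.logb, div_le_iff₀ (by linarith)]
  nlinarith

lemma logb2_mul_ge {μ m : ℝ} (hμ0 : 0 < μ) (hμ1 : μ ≤ 1) (hm : 0 ≤ m) :
    Real.logb 2 (1+m) + Real.logb 2 μ ≤ Real.logb 2 (1+μ*m) := by
  have h1 : μ * (1+m) ≤ 1 + μ*m := by nlinarith
  have h0 : (0:ℝ) < μ * (1+m) := by nlinarith
  calc Real.logb 2 (1+m) + Real.logb 2 μ = Real.logb 2 (μ * (1+m)) := by
        rw [Real.logb_mul (by positivity) (by positivity)]; ring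
    _ ≤ Real.logb 2 (1+μ*m) := Real.logb_le_logb_of_le one_lt_two h0 h1

/-- key gap lemma for strict monotonicity: log₂(1+λm) - log₂(1+m) is
monotone in m and positive for λ>1, m>0 -/
lemma logb2_gap_mono {lam m₁ m : ℝ} (hlam : 1 ≤ lam) (h1 : 0 ≤ m₁) (h : m₁ ≤ m) :
    Real.logb 2 (1+lam*m₁) - Real.logb 2 (1+m₁) ≤
      Real.logb 2 (1+lam*m) - Real.logb 2 (1+m) := by
  have hm : 0 ≤ m := le_trans h1 h
  have key : (1+lam*m₁) * (1+m) ≤ (1+lam*m) * (1+m₁) := by nlinarith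
  have e1 : Real.logb 2 ((1+lam*m₁) * (1+m)) = _ :=
    Real.logb_mul (by positivity) (by positivity)
  have e2 : Real.logb 2 ((1+lam*m) * (1+m₁)) = _ :=
    Real.logb_mul (by positivity) (by positivity)
  have := Real.logb_le_logb_of_le one_lt_two (by positivity) key
  rw [e1, e2] at this
  linarith

lemma logb2_gap_pos {lam m₁ : ℝ} (hlam : 1 < lam) (h1 : 0 < m₁) :
    0 < Real.logb 2 (1+lam*m₁) - Real.logb 2 (1+m₁) := by
  have : Real.logb 2 (1+m₁) < Real.logb 2 (1+lam*m₁) :=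
    Real.logb_lt_logb one_lt_two (by linarith) (by nlinarith)
  linarith

end helpers

section xitheta

variable {U G : ℕ} {K : Fin G → ℕ}

lemma xiX_nonneg {η : ∀ j : Fin G, Fin (K j) → ℝ} {τ : ℕ} {qup : ∀ j : Fin G, Fin (K j) → ℝ}
    (hη : ∀ j k, 0 < η j k) (hq : ∀ j k, 0 ≤ qup j k) (j : Fin G) (k : Fin (K j)) :
    0 ≤ xiX η τ qup j k := by
  have hd : (0:ℝ) < 1 + ∑ t, (τ : ℝ) * qup j t * η j t := by
    have : (0:ℝ) ≤ ∑ t, (τ : ℝ) * qup j t * η j t :=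
      Finset.sum_nonneg fun t _ => by
        have := hq j t; have := (hη j t).le; positivity
    linarith
  have hn : (0:ℝ) ≤ (τ : ℝ) * qup j k * (η j k) ^ 2 := by
    have := hq j k; positivity
  exact div_nonneg hn hd.le

lemma xiX_le {η : ∀ j : Fin G, Fin (K j) → ℝ} {τ : ℕ} {qup : ∀ j : Fin G, Fin (K j) → ℝ}
    (hη : ∀ j k, 0 < η j k) (hq : ∀ j k, 0 ≤ qup j k) (j : Fin G) (k : Fin (K j)) :
    xiX η τ qup j k ≤ η j k := by
  have hterm : ∀ t : Fin (K j), (0:ℝ) ≤ (τ : ℝ) * qup j t * η j t := fun t => by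
    have := hq j t; have := (hη j t).le; positivity
  have hd : (0:ℝ) < 1 + ∑ t, (τ : ℝ) * qup j t * η j t := by
    have : (0:ℝ) ≤ ∑ t, (τ : ℝ) * qup j t * η j t := Finset.sum_nonneg fun t _ => hterm t
    linarith
  rw [xiX, div_le_iff₀ hd]
  have hsingle : (τ : ℝ) * qup j k * η j k ≤ ∑ t, (τ : ℝ) * qup j t * η j t :=
    Finset.single_le_sum (fun t _ => hterm t) (Finset.mem_univ k)
  have hηk := hη j k
  nlinarith [hterm k]

lemma xiX_pos {η : ∀ j : Fin G, Fin (K j) → ℝ} {τ : ℕ} {qup : ∀ j : Fin G, Fin (K j) → ℝ}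
    (hη : ∀ j k, 0 < η j k) (hq : ∀ j k, 0 ≤ qup j k) (hτ : 1 ≤ τ)
    {j : Fin G} {k : Fin (K j)} (hqk : 0 < qup j k) :
    0 < xiX η τ qup j k := by
  have hd : (0:ℝ) < 1 + ∑ t, (τ : ℝ) * qup j t * η j t := by
    have : (0:ℝ) ≤ ∑ t, (τ : ℝ) * qup j t * η j t :=
      Finset.sum_nonneg fun t _ => by
        have := hq j t; have := (hη j t).le; positivity
    linarith
  have hτ' : (0:ℝ) < (τ:ℝ) := by exact_mod_cast hτ
  have hn : (0:ℝ) < (τ : ℝ) * qup j k * (η j k) ^ 2 := by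
    have := hη j k; positivity
  exact div_pos hn hd

lemma thetaX_nonneg {β : Fin U → ℝ} {τ : ℕ} {pup : Fin U → ℝ}
    (hβ : ∀ m, 0 < β m) (hp : ∀ m, 0 ≤ pup m) (m : Fin U) :
    0 ≤ thetaX β τ pup m := by
  have h1 : (0:ℝ) ≤ (τ:ℝ) * pup m * β m := by
    have := hp m; have := (hβ m).le; positivity
  have hn : (0:ℝ) ≤ (τ : ℝ) * pup m * (β m) ^ 2 := by
    have := hp m; have := (hβ m).le; positivity
  exact div_nonneg hn (by linarith)

lemma thetaX_le {β : Fin U → ℝ} {τ : ℕ} {pup : Fin U → ℝ}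
    (hβ : ∀ m, 0 < β m) (hp : ∀ m, 0 ≤ pup m) (m : Fin U) :
    thetaX β τ pup m ≤ β m := by
  have h1 : (0:ℝ) ≤ (τ:ℝ) * pup m * β m := by
    have := hp m; have := (hβ m).le; positivity
  rw [thetaX, div_le_iff₀ (by linarith)]
  have := hβ m
  nlinarith

lemma thetaX_pos {β : Fin U → ℝ} {τ : ℕ} {pup : Fin U → ℝ}
    (hβ : ∀ m, 0 < β m) (hp : ∀ m, 0 ≤ pup m) (hτ : 1 ≤ τ) {m : Fin U} (hm : 0 < pup m) :
    0 < thetaX β τ pup m := by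
  have hτ' : (0:ℝ) < (τ:ℝ) := by exact_mod_cast hτ
  have h1 : (0:ℝ) ≤ (τ:ℝ) * pup m * β m := by
    have := (hp m); have := (hβ m).le; positivity
  have hn : (0:ℝ) < (τ : ℝ) * pup m * (β m) ^ 2 := by
    have := hβ m; positivity
  exact div_pos hn (by linarith)

end xitheta



section infs
variable {G : ℕ} {K : Fin G → ℕ}

lemma iInf2_le (hK : ∀ j, 1 ≤ K j) (f : ∀ j : Fin G, Fin (K j) → ℝ)
    (j : Fin G) (k : Fin (K j)) : (⨅ j, ⨅ k, f j k) ≤ f j k := by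
  haveI : ∀ i : Fin G, Nonempty (Fin (K i)) := fun i => ⟨⟨0, hK i⟩⟩
  have h1 : (⨅ j, ⨅ k, f j k) ≤ ⨅ k, f j k :=
    ciInf_le (Set.Finite.bddBelow (Set.finite_range _)) j
  exact h1.trans (ciInf_le (Set.Finite.bddBelow (Set.finite_range _)) k)

lemma le_iInf2 (hG : 1 ≤ G) (hK : ∀ j, 1 ≤ K j) {f : ∀ j : Fin G, Fin (K j) → ℝ} {a : ℝ}
    (h : ∀ j k, a ≤ f j k) : a ≤ ⨅ j, ⨅ k, f j k := by
  haveI : Nonempty (Fin G) := ⟨⟨0, hG⟩⟩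
  haveI : ∀ i : Fin G, Nonempty (Fin (K i)) := fun i => ⟨⟨0, hK i⟩⟩
  exact le_ciInf fun j => le_ciInf fun k => h j k

lemma iInf2_pos (hG : 1 ≤ G) (hK : ∀ j, 1 ≤ K j) {f : ∀ j : Fin G, Fin (K j) → ℝ}
    (h : ∀ j k, 0 < f j k) : 0 < ⨅ j, ⨅ k, f j k := by
  haveI : Nonempty (Fin G) := ⟨⟨0, hG⟩⟩
  haveI : ∀ i : Fin G, Nonempty (Fin (K i)) := fun i => ⟨⟨0, hK i⟩⟩
  haveI : Nonempty ((j : Fin G) × Fin (K j)) := ⟨⟨⟨0, hG⟩, ⟨0, hK _⟩⟩⟩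
  obtain ⟨p0, hmin⟩ := Finite.exists_min (fun p : (j : Fin G) × Fin (K j) => f p.1 p.2)
  exact lt_of_lt_of_le (h p0.1 p0.2) (le_iInf2 hG hK fun j k => hmin ⟨j, k⟩)

end infs

section muSide

variable {U G : ℕ} {K : Fin G → ℕ} {N T : ℕ} {P : ℝ}
  {η Emu : ∀ j : Fin G, Fin (K j) → ℝ} {Eun : Fin U → ℝ}

/-- The set whose `sSup` is `VmuX`. -/
def SmuS (N T : ℕ) (P : ℝ) (η Emu : ∀ j : Fin G, Fin (K j) → ℝ) (Eun : Fin U → ℝ)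
    (s : ℝ) : Set ℝ :=
  {v : ℝ | ∃ (τ : ℕ) (qup : ∀ j : Fin G, Fin (K j) → ℝ) (qdl : Fin G → ℝ)
      (pup pdl : Fin U → ℝ),
    feasX T P Emu Eun τ qup qdl pup pdl ∧
    (∑ j, qdl j ≤ s) ∧ (∑ m, pdl m = P - s) ∧
    v = OmuX N T η τ qup qdl pdl}

lemma VmuX_eq (β α : Fin U → ℝ) (s : ℝ) :
    VmuX N T P η Emu β Eun α s = sSup (SmuS N T P η Emu Eun s) := rfl

lemma Smu_elem_le (hG : 1 ≤ G) (hK : ∀ j, 1 ≤ K j) (hT : 0 < T)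
    (hη : ∀ j k, 0 < η j k) {s v : ℝ} (hs : 0 ≤ s)
    (hv : v ∈ SmuS N T P η Emu Eun s) (j₀ : Fin G) (k₀ : Fin (K j₀)) :
    0 ≤ v ∧ v ≤ Real.logb 2 (1 + (N : ℝ) * η j₀ k₀ * s) := by
  obtain ⟨τ, qup, qdl, pup, pdl, hfeas, hqs, hps, rfl⟩ := hv
  obtain ⟨hτ1, hτ2, hqdl, hpdl, hqup, hpup, htot⟩ := hfeas
  have hxi0 : ∀ j k, 0 ≤ xiX η τ qup j k := xiX_nonneg hη fun j k => (hqup j k).1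
  have hq0 : (0:ℝ) ≤ ∑ j, qdl j := Finset.sum_nonneg fun j _ => hqdl j
  have hp0 : (0:ℝ) ≤ ∑ m, pdl m := Finset.sum_nonneg fun m _ => hpdl m
  set m0 := ⨅ j : Fin G, ⨅ k : Fin (K j),
    (N : ℝ) * qdl j * xiX η τ qup j k / (1 + η j k * (∑ m, pdl m + ∑ i, qdl i)) with hm0
  have hterm0 : ∀ (j : Fin G) (k : Fin (K j)), 0 ≤
      (N : ℝ) * qdl j * xiX η τ qup j k / (1 + η j k * (∑ m, pdl m + ∑ i, qdl i)) := by
    intro j k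
    have h1 : (0:ℝ) ≤ (N : ℝ) * qdl j * xiX η τ qup j k := by
      have := hqdl j; have := hxi0 j k; positivity
    have h2 : (0:ℝ) < 1 + η j k * (∑ m, pdl m + ∑ i, qdl i) := by
      have := hη j k; nlinarith
    exact div_nonneg h1 h2.le
  have hM0 : 0 ≤ m0 := le_iInf2 hG hK hterm0
  have hMle : m0 ≤ (N : ℝ) * η j₀ k₀ * s := by
    refine (iInf2_le hK _ j₀ k₀).trans ?_
    have h1 : (0:ℝ) ≤ (N : ℝ) * qdl j₀ * xiX η τ qup j₀ k₀ := by
      have := hqdl j₀; have := hxi0 j₀ k₀; positivity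
    have hd1 : (1:ℝ) ≤ 1 + η j₀ k₀ * (∑ m, pdl m + ∑ i, qdl i) := by
      have := hη j₀ k₀; nlinarith
    refine (div_le_self h1 hd1).trans ?_
    have hxile := xiX_le (τ := τ) hη (fun j k => (hqup j k).1) j₀ k₀
    have hqle : qdl j₀ ≤ s :=
      le_trans (Finset.single_le_sum (fun j _ => hqdl j) (Finset.mem_univ j₀)) hqs
    have hN0 : (0:ℝ) ≤ (N:ℝ) := Nat.cast_nonneg N
    have hmul : qdl j₀ * xiX η τ qup j₀ k₀ ≤ s * η j₀ k₀ :=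
      mul_le_mul hqle hxile (hxi0 j₀ k₀) hs
    calc (N:ℝ) * qdl j₀ * xiX η τ qup j₀ k₀
        = (N:ℝ) * (qdl j₀ * xiX η τ qup j₀ k₀) := by ring
      _ ≤ (N:ℝ) * (s * η j₀ k₀) := mul_le_mul_of_nonneg_left hmul hN0
      _ = (N:ℝ) * η j₀ k₀ * s := by ring
  have hTpos : (0:ℝ) < (T:ℝ) := by exact_mod_cast hT
  have hc0 : 0 ≤ 1 - (τ:ℝ)/(T:ℝ) := by
    have : (τ:ℝ) ≤ (T:ℝ) := by exact_mod_cast hτ2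
    rw [sub_nonneg, div_le_one hTpos]; exact this
  have hc1 : 1 - (τ:ℝ)/(T:ℝ) ≤ 1 := by
    have : (0:ℝ) ≤ (τ:ℝ)/(T:ℝ) := by positivity
    linarith
  have hL0 : 0 ≤ Real.logb 2 (1 + m0) := Real.logb_nonneg one_lt_two (by linarith)
  have hrepr : OmuX N T η τ qup qdl pdl = (1 - (τ:ℝ)/(T:ℝ)) * Real.logb 2 (1 + m0) := by
    simp only [OmuX, hm0]
  constructor
  · rw [hrepr]; exact mul_nonneg hc0 hL0
  · rw [hrepr]
    refine (mul_le_of_le_one_left hL0 hc1).trans ?_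
    exact Real.logb_le_logb_of_le one_lt_two (by linarith) (by linarith)

lemma Smu_bddAbove (hG : 1 ≤ G) (hK : ∀ j, 1 ≤ K j) (hT : 0 < T)
    (hη : ∀ j k, 0 < η j k) {s : ℝ} (hs : 0 ≤ s) :
    BddAbove (SmuS N T P η Emu Eun s) :=
  ⟨Real.logb 2 (1 + (N : ℝ) * η ⟨0, hG⟩ ⟨0, hK ⟨0, hG⟩⟩ * s),
    fun _ hv => (Smu_elem_le hG hK hT hη hs hv ⟨0, hG⟩ ⟨0, hK ⟨0, hG⟩⟩).2⟩

lemma zero_mem_SmuS (hU : 1 ≤ U) (hG : 1 ≤ G) (hK : ∀ j, 1 ≤ K j) (hUG : U + G ≤ T)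
    (hEmu : ∀ j k, 0 ≤ Emu j k) (hEun : ∀ m, 0 ≤ Eun m)
    {s : ℝ} (hs0 : 0 ≤ s) (hsP : s ≤ P) :
    (0:ℝ) ∈ SmuS N T P η Emu Eun s := by
  have hUpos : (0:ℝ) < (U:ℝ) := by exact_mod_cast hU
  have hsump : ∑ _m : Fin U, (P - s)/(U:ℝ) = P - s := by
    rw [Finset.sum_const, Finset.card_fin, nsmul_eq_mul, mul_div_cancel₀ _ hUpos.ne']
  haveI : Nonempty (Fin G) := ⟨⟨0, hG⟩⟩
  haveI : ∀ i : Fin G, Nonempty (Fin (K i)) := fun i => ⟨⟨0, hK i⟩⟩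
  refine ⟨U + G, fun _ _ => 0, fun _ => 0, fun _ => 0, fun _ => (P - s)/(U:ℝ),
    ⟨le_rfl, hUG, fun j => le_rfl, fun m => div_nonneg (by linarith) hUpos.le,
     fun j k => ⟨le_rfl, by simpa using hEmu j k⟩,
     fun m => ⟨le_rfl, by simpa using hEun m⟩, ?_⟩, by simpa using hs0, hsump, ?_⟩
  · rw [hsump]; simp; linarith
  · simp [OmuX, ciInf_const]

lemma Smu_pos (hU : 1 ≤ U) (hG : 1 ≤ G) (hK : ∀ j, 1 ≤ K j) (hN : 1 ≤ N) (hT : U + G < T)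
    (hη : ∀ j k, 0 < η j k) (hEmu : ∀ j k, 0 < Emu j k) (hEun : ∀ m, 0 ≤ Eun m)
    {s : ℝ} (h0 : 0 < s) (hsP : s ≤ P) :
    ∃ v ∈ SmuS N T P η Emu Eun s, 0 < v := by
  have hT1 : 1 ≤ T := by omega
  have hτ1 : 1 ≤ T - 1 := by omega
  have hcast : ((T - 1 : ℕ) : ℝ) = (T:ℝ) - 1 := by
    rw [Nat.cast_sub hT1]; norm_num
  have hτpos : (0:ℝ) < ((T-1:ℕ):ℝ) := by exact_mod_cast hτ1
  have hGpos : (0:ℝ) < (G:ℝ) := by exact_mod_cast hG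
  have hUpos : (0:ℝ) < (U:ℝ) := by exact_mod_cast hU
  have hTpos : (0:ℝ) < (T:ℝ) := by exact_mod_cast (by omega : 0 < T)
  set qup : ∀ j : Fin G, Fin (K j) → ℝ := fun j k => Emu j k / ((T-1:ℕ):ℝ) with hqups
  set qdl : Fin G → ℝ := fun _ => s / (G:ℝ) with hqdls
  set pdl : Fin U → ℝ := fun _ => (P - s)/(U:ℝ) with hpdls
  have hsumq : ∑ j, qdl j = s := by
    rw [hqdls, Finset.sum_const, Finset.card_fin, nsmul_eq_mul, mul_div_cancel₀ _ hGpos.ne']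
  have hsump : ∑ m, pdl m = P - s := by
    rw [hpdls, Finset.sum_const, Finset.card_fin, nsmul_eq_mul, mul_div_cancel₀ _ hUpos.ne']
  have hfeas : feasX T P Emu Eun (T-1) qup qdl (fun _ => 0) pdl := by
    refine ⟨by omega, by omega, fun j => div_nonneg h0.le hGpos.le,
      fun m => div_nonneg (by linarith) hUpos.le,
      fun j k => ⟨div_nonneg (hEmu j k).le hτpos.le, ?_⟩,
      fun m => ⟨le_rfl, by simpa using hEun m⟩, ?_⟩
    · rw [hqups]
      rw [mul_div_cancel₀ _ hτpos.ne']
    · rw [hsumq, hsump]; linarith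
  refine ⟨OmuX N T η (T-1) qup qdl pdl,
    ⟨T-1, qup, qdl, fun _ => 0, pdl, hfeas, le_of_eq hsumq, hsump, rfl⟩, ?_⟩
  have hc : 1 - ((T-1:ℕ):ℝ)/(T:ℝ) = 1/(T:ℝ) := by
    rw [hcast]; field_simp; ring
  have htot : ∑ m, pdl m + ∑ i, qdl i = P := by rw [hsump, hsumq]; ring
  have hNpos : (0:ℝ) < (N:ℝ) := by exact_mod_cast hN
  have hM : 0 < ⨅ j : Fin G, ⨅ k : Fin (K j),
      (N : ℝ) * qdl j * xiX η (T-1) qup j k / (1 + η j k * (∑ m, pdl m + ∑ i, qdl i)) := by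
    refine iInf2_pos hG hK fun j k => ?_
    have hxi : 0 < xiX η (T-1) qup j k :=
      xiX_pos hη (fun j' k' => div_nonneg (hEmu j' k').le hτpos.le) (by omega)
        (div_pos (hEmu j k) hτpos)
    have hqdlj : 0 < qdl j := div_pos h0 hGpos
    have hd : 0 < 1 + η j k * (∑ m, pdl m + ∑ i, qdl i) := by
      rw [htot]; have := hη j k; nlinarith
    exact div_pos (mul_pos (mul_pos hNpos hqdlj) hxi) hd
  have hrepr : OmuX N T η (T-1) qup qdl pdl = (1 - ((T-1:ℕ):ℝ)/(T:ℝ)) * Real.logb 2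
      (1 + ⨅ j : Fin G, ⨅ k : Fin (K j),
        (N : ℝ) * qdl j * xiX η (T-1) qup j k /
          (1 + η j k * (∑ m, pdl m + ∑ i, qdl i))) := by
    simp only [OmuX]
  rw [hrepr, hc]
  exact mul_pos (by positivity) (Real.logb_pos one_lt_two (by linarith))

lemma coefX {T : ℕ} (hT : 0 < T) {τ : ℕ} (hτ : τ ≤ T) :
    0 ≤ 1 - (τ:ℝ)/(T:ℝ) ∧ 1 - (τ:ℝ)/(T:ℝ) ≤ 1 := by
  have hTpos : (0:ℝ) < (T:ℝ) := by exact_mod_cast hT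
  have h1 : (τ:ℝ) ≤ (T:ℝ) := by exact_mod_cast hτ
  have h2 : (0:ℝ) ≤ (τ:ℝ)/(T:ℝ) := by positivity
  exact ⟨by rw [sub_nonneg, div_le_one hTpos]; exact h1, by linarith⟩

set_option maxHeartbeats 1000000 in
lemma Smu_transfer_up (hG : 1 ≤ G) (hK : ∀ j, 1 ≤ K j) (hT : 0 < T)
    (hη : ∀ j k, 0 < η j k)
    {s s' v : ℝ} (h0 : 0 < s) (hss' : s ≤ s') (hs'P : s' ≤ P)
    (hv : v ∈ SmuS N T P η Emu Eun s) :
    ∃ (τ : ℕ) (m1 : ℝ), U + G ≤ τ ∧ τ ≤ T ∧ 0 ≤ m1 ∧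
      v = (1 - (τ:ℝ)/(T:ℝ)) * Real.logb 2 (1 + m1) ∧
      ∃ v' ∈ SmuS N T P η Emu Eun s',
        (1 - (τ:ℝ)/(T:ℝ)) * Real.logb 2 (1 + (s'/s) * m1) ≤ v' := by
  obtain ⟨τ, qup, qdl, pup, pdl, hfeas, hqs, hps, rfl⟩ := hv
  obtain ⟨hτ1, hτ2, hqdl, hpdl, hqup, hpup, htot⟩ := hfeas
  have hxi0 : ∀ j k, 0 ≤ xiX η τ qup j k := xiX_nonneg hη fun j k => (hqup j k).1
  have hq0 : (0:ℝ) ≤ ∑ j, qdl j := Finset.sum_nonneg fun j _ => hqdl j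
  have hp0 : (0:ℝ) ≤ ∑ m, pdl m := Finset.sum_nonneg fun m _ => hpdl m
  obtain ⟨hc0, hc1⟩ := coefX hT hτ2
  set m1 := ⨅ j : Fin G, ⨅ k : Fin (K j),
    (N : ℝ) * qdl j * xiX η τ qup j k / (1 + η j k * (∑ m, pdl m + ∑ i, qdl i)) with hm1
  have hterm0 : ∀ (j : Fin G) (k : Fin (K j)), 0 ≤
      (N : ℝ) * qdl j * xiX η τ qup j k / (1 + η j k * (∑ m, pdl m + ∑ i, qdl i)) := by
    intro j k
    have h1 : (0:ℝ) ≤ (N : ℝ) * qdl j * xiX η τ qup j k := by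
      have := hqdl j; have := hxi0 j k; positivity
    have h2 : (0:ℝ) < 1 + η j k * (∑ m, pdl m + ∑ i, qdl i) := by
      have := hη j k; nlinarith
    exact div_nonneg h1 h2.le
  have hM0 : 0 ≤ m1 := le_iInf2 hG hK hterm0
  have hrepr : OmuX N T η τ qup qdl pdl = (1 - (τ:ℝ)/(T:ℝ)) * Real.logb 2 (1 + m1) := by
    simp only [OmuX, hm1]
  refine ⟨τ, m1, hτ1, hτ2, hM0, hrepr, ?_⟩
  rcases eq_or_lt_of_le hss' with rfl | hlt
  · refine ⟨OmuX N T η τ qup qdl pdl, ⟨τ, qup, qdl, pup, pdl,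
      ⟨hτ1, hτ2, hqdl, hpdl, hqup, hpup, htot⟩, hqs, hps, rfl⟩, ?_⟩
    rw [hrepr, div_self h0.ne', one_mul]
  · have hPs : 0 < P - s := by linarith
    set lam := s'/s with hlamdef
    have hlam1 : 1 ≤ lam := (one_le_div h0).2 hss'
    have hlam0 : 0 ≤ lam := by linarith
    have hlams : lam * s = s' := div_mul_cancel₀ _ h0.ne'
    set qdl' : Fin G → ℝ := fun j => lam * qdl j with hqdl'def
    set pdl' : Fin U → ℝ := fun i => ((P - s')/(P - s)) * pdl i with hpdl'def
    have hsumq' : ∑ j, qdl' j = lam * ∑ j, qdl j := by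
      rw [hqdl'def, ← Finset.mul_sum]
    have hsump' : ∑ m, pdl' m = P - s' := by
      rw [hpdl'def, ← Finset.mul_sum, hps, div_mul_cancel₀ _ hPs.ne']
    have hq's' : ∑ j, qdl' j ≤ s' := by
      rw [hsumq', ← hlams]; exact mul_le_mul_of_nonneg_left hqs hlam0
    have hfeas' : feasX T P Emu Eun τ qup qdl' pup pdl' := by
      refine ⟨hτ1, hτ2, fun j => mul_nonneg hlam0 (hqdl j),
        fun m => mul_nonneg (div_nonneg (by linarith) hPs.le) (hpdl m), hqup, hpup, ?_⟩
      rw [hsump']; linarith [hq's']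
    refine ⟨OmuX N T η τ qup qdl' pdl',
      ⟨τ, qup, qdl', pup, pdl', hfeas', hq's', hsump', rfl⟩, ?_⟩
    set m2 := ⨅ j : Fin G, ⨅ k : Fin (K j),
      (N : ℝ) * qdl' j * xiX η τ qup j k / (1 + η j k * (∑ m, pdl' m + ∑ i, qdl' i)) with hm2
    have hrepr' : OmuX N T η τ qup qdl' pdl' =
        (1 - (τ:ℝ)/(T:ℝ)) * Real.logb 2 (1 + m2) := by
      simp only [OmuX, hm2]
    have htot'le : ∑ m, pdl' m + ∑ i, qdl' i ≤ ∑ m, pdl m + ∑ i, qdl i := by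
      rw [hsump', hsumq', hps]
      nlinarith [hqs, hlam1, hlams]
    have htot'0 : 0 ≤ ∑ m, pdl' m + ∑ i, qdl' i := by
      rw [hsump', hsumq']
      have := mul_nonneg hlam0 hq0
      linarith
    have hkey : lam * m1 ≤ m2 := by
      refine le_iInf2 hG hK fun j k => ?_
      have hstep1 : lam * m1 ≤ lam * ((N : ℝ) * qdl j * xiX η τ qup j k /
          (1 + η j k * (∑ m, pdl m + ∑ i, qdl i))) :=
        mul_le_mul_of_nonneg_left (by rw [hm1]; exact iInf2_le hK _ j k) hlam0
      refine hstep1.trans ?_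
      have hnum : lam * ((N : ℝ) * qdl j * xiX η τ qup j k) =
          (N : ℝ) * qdl' j * xiX η τ qup j k := by
        simp only [hqdl'def]; ring
      have halg : lam * ((N : ℝ) * qdl j * xiX η τ qup j k /
          (1 + η j k * (∑ m, pdl m + ∑ i, qdl i))) =
          ((N : ℝ) * qdl' j * xiX η τ qup j k) /
            (1 + η j k * (∑ m, pdl m + ∑ i, qdl i)) := by
        rw [← hnum]; exact (mul_div_assoc _ _ _).symm
      rw [halg]
      have hnum0 : 0 ≤ (N : ℝ) * qdl' j * xiX η τ qup j k := by
        rw [← hnum]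
        have h1 : (0:ℝ) ≤ (N : ℝ) * qdl j * xiX η τ qup j k := by
          have := hqdl j; have := hxi0 j k; positivity
        exact mul_nonneg hlam0 h1
      have hd'pos : 0 < 1 + η j k * (∑ m, pdl' m + ∑ i, qdl' i) := by
        have := hη j k; nlinarith
      have hdle : 1 + η j k * (∑ m, pdl' m + ∑ i, qdl' i) ≤
          1 + η j k * (∑ m, pdl m + ∑ i, qdl i) := by
        have := hη j k; nlinarith
      exact div_le_div_of_nonneg_left hnum0 hd'pos hdle
    rw [hrepr']
    refine mul_le_mul_of_nonneg_left ?_ hc0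
    refine Real.logb_le_logb_of_le one_lt_two ?_ (by linarith)
    nlinarith [mul_nonneg hlam0 hM0]

set_option maxHeartbeats 1000000 in
lemma Smu_transfer_down (hU : 1 ≤ U) (hG : 1 ≤ G) (hK : ∀ j, 1 ≤ K j) (hT : 0 < T)
    (hη : ∀ j k, 0 < η j k) {C : ℝ} (hC : ∀ j k, η j k ≤ C) (hC0 : 0 ≤ C)
    {s s' v' : ℝ} (h0 : 0 < s) (hss' : s ≤ s') (hs'P : s' ≤ P)
    (hv' : v' ∈ SmuS N T P η Emu Eun s') :
    ∃ v ∈ SmuS N T P η Emu Eun s,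
      v' + Real.logb 2 ((s/s') / (1 + C * (s' - s))) ≤ v := by
  obtain ⟨τ, qup, qdl', pup, pdl', hfeas, hqs', hps', rfl⟩ := hv'
  obtain ⟨hτ1, hτ2, hqdl', hpdl', hqup, hpup, htot'⟩ := hfeas
  have hs'0 : 0 < s' := lt_of_lt_of_le h0 hss'
  have hxi0 : ∀ j k, 0 ≤ xiX η τ qup j k := xiX_nonneg hη fun j k => (hqup j k).1
  have hq0 : (0:ℝ) ≤ ∑ j, qdl' j := Finset.sum_nonneg fun j _ => hqdl' j
  have hp0 : (0:ℝ) ≤ ∑ m, pdl' m := Finset.sum_nonneg fun m _ => hpdl' m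
  obtain ⟨hc0, hc1⟩ := coefX hT hτ2
  have hUpos : (0:ℝ) < (U:ℝ) := by exact_mod_cast hU
  set Δ := s' - s with hΔdef
  have hΔ0 : 0 ≤ Δ := by rw [hΔdef]; linarith
  have hden : (0:ℝ) < 1 + C * Δ := by nlinarith
  have hss'1 : s / s' ≤ 1 := (div_le_one hs'0).2 hss'
  set μ := (s/s') / (1 + C * Δ) with hμdef
  have hμ0 : 0 < μ := div_pos (div_pos h0 hs'0) hden
  have hμ1 : μ ≤ 1 := by
    rw [hμdef, div_le_one hden]
    nlinarith
  set qdl : Fin G → ℝ := fun j => (s/s') * qdl' j with hqdldef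
  set pdl : Fin U → ℝ := fun _ => (P - s)/(U:ℝ) with hpdldef
  have hsdiv0 : (0:ℝ) ≤ s / s' := div_nonneg h0.le hs'0.le
  have hsumq : ∑ j, qdl j = (s/s') * ∑ j, qdl' j := by rw [hqdldef, ← Finset.mul_sum]
  have hqsle : ∑ j, qdl j ≤ s := by
    rw [hsumq]
    calc (s/s') * ∑ j, qdl' j ≤ (s/s') * s' := mul_le_mul_of_nonneg_left hqs' hsdiv0
      _ = s := div_mul_cancel₀ _ hs'0.ne'
  have hsump : ∑ m, pdl m = P - s := by
    rw [hpdldef, Finset.sum_const, Finset.card_fin, nsmul_eq_mul,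
      mul_div_cancel₀ _ hUpos.ne']
  have hfeas2 : feasX T P Emu Eun τ qup qdl pup pdl := by
    refine ⟨hτ1, hτ2, fun j => mul_nonneg hsdiv0 (hqdl' j),
      fun m => div_nonneg (by linarith) hUpos.le, hqup, hpup, ?_⟩
    rw [hsump]; linarith [hqsle]
  refine ⟨OmuX N T η τ qup qdl pdl, ⟨τ, qup, qdl, pup, pdl, hfeas2, hqsle, hsump, rfl⟩, ?_⟩
  set m1 := ⨅ j : Fin G, ⨅ k : Fin (K j),
    (N : ℝ) * qdl' j * xiX η τ qup j k / (1 + η j k * (∑ m, pdl' m + ∑ i, qdl' i)) with hm1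
  set m2 := ⨅ j : Fin G, ⨅ k : Fin (K j),
    (N : ℝ) * qdl j * xiX η τ qup j k / (1 + η j k * (∑ m, pdl m + ∑ i, qdl i)) with hm2
  have hrepr1 : OmuX N T η τ qup qdl' pdl' = (1 - (τ:ℝ)/(T:ℝ)) * Real.logb 2 (1 + m1) := by
    simp only [OmuX, hm1]
  have hrepr2 : OmuX N T η τ qup qdl pdl = (1 - (τ:ℝ)/(T:ℝ)) * Real.logb 2 (1 + m2) := by
    simp only [OmuX, hm2]
  have hterm0 : ∀ (j : Fin G) (k : Fin (K j)), 0 ≤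
      (N : ℝ) * qdl' j * xiX η τ qup j k / (1 + η j k * (∑ m, pdl' m + ∑ i, qdl' i)) := by
    intro j k
    have h1 : (0:ℝ) ≤ (N : ℝ) * qdl' j * xiX η τ qup j k := by
      have := hqdl' j; have := hxi0 j k; positivity
    have h2 : (0:ℝ) < 1 + η j k * (∑ m, pdl' m + ∑ i, qdl' i) := by
      have := hη j k; nlinarith
    exact div_nonneg h1 h2.le
  have hM10 : 0 ≤ m1 := le_iInf2 hG hK hterm0
  have htotnew : ∑ m, pdl m + ∑ i, qdl i ≤ (∑ m, pdl' m + ∑ i, qdl' i) + Δ := by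
    rw [hsump, hsumq, hps', hΔdef]
    nlinarith [hq0, hss'1]
  have htotnew0 : 0 ≤ ∑ m, pdl m + ∑ i, qdl i := by
    rw [hsump, hsumq]
    have := mul_nonneg hsdiv0 hq0
    linarith
  have hkey : μ * m1 ≤ m2 := by
    refine le_iInf2 hG hK fun j k => ?_
    have hstep1 : μ * m1 ≤ μ * ((N : ℝ) * qdl' j * xiX η τ qup j k /
        (1 + η j k * (∑ m, pdl' m + ∑ i, qdl' i))) :=
      mul_le_mul_of_nonneg_left (by rw [hm1]; exact iInf2_le hK _ j k) hμ0.le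
    refine hstep1.trans ?_
    have hdd' : 0 < 1 + η j k * (∑ m, pdl' m + ∑ i, qdl' i) := by
      have := hη j k; nlinarith
    have hdd : 0 < 1 + η j k * (∑ m, pdl m + ∑ i, qdl i) := by
      have := hη j k; nlinarith
    have hcompare : 1 + η j k * (∑ m, pdl m + ∑ i, qdl i) ≤
        (1 + C * Δ) * (1 + η j k * (∑ m, pdl' m + ∑ i, qdl' i)) := by
      have hηC := hC j k; have hηp := hη j k
      have h1 : η j k * (∑ m, pdl m + ∑ i, qdl i) ≤
          η j k * ((∑ m, pdl' m + ∑ i, qdl' i) + Δ) :=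
        mul_le_mul_of_nonneg_left htotnew hηp.le
      have h2 : η j k * Δ ≤ C * Δ := mul_le_mul_of_nonneg_right hηC hΔ0
      have h3 : 0 ≤ C * Δ * (η j k * (∑ m, pdl' m + ∑ i, qdl' i)) := by
        have h4 : 0 ≤ η j k * (∑ m, pdl' m + ∑ i, qdl' i) :=
          mul_nonneg hηp.le (by linarith)
        exact mul_nonneg (mul_nonneg hC0 hΔ0) h4
      nlinarith
    have hnum : (s/s') * ((N : ℝ) * qdl' j * xiX η τ qup j k) =
        (N : ℝ) * qdl j * xiX η τ qup j k := by
      simp only [hqdldef]; ring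
    have halg : μ * ((N : ℝ) * qdl' j * xiX η τ qup j k /
        (1 + η j k * (∑ m, pdl' m + ∑ i, qdl' i))) =
        ((N : ℝ) * qdl j * xiX η τ qup j k) /
          ((1 + C * Δ) * (1 + η j k * (∑ m, pdl' m + ∑ i, qdl' i))) := by
      rw [hμdef, div_mul_div_comm, hnum]
    rw [halg]
    have hnum0 : 0 ≤ (N : ℝ) * qdl j * xiX η τ qup j k := by
      rw [← hnum]
      have h1 : (0:ℝ) ≤ (N : ℝ) * qdl' j * xiX η τ qup j k := by
        have := hqdl' j; have := hxi0 j k; positivity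
      exact mul_nonneg hsdiv0 h1
    exact div_le_div_of_nonneg_left hnum0 hdd hcompare
  rw [hrepr1, hrepr2]
  have hμm0 : 0 < 1 + μ * m1 := by nlinarith [mul_nonneg hμ0.le hM10]
  have hlog1 : Real.logb 2 (1 + m1) + Real.logb 2 μ ≤ Real.logb 2 (1 + μ * m1) :=
    logb2_mul_ge hμ0 hμ1 hM10
  have hlog2 : Real.logb 2 (1 + μ * m1) ≤ Real.logb 2 (1 + m2) :=
    Real.logb_le_logb_of_le one_lt_two hμm0 (by linarith)
  have hμlog : Real.logb 2 μ ≤ 0 := Real.logb_nonpos one_lt_two hμ0.le hμ1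
  have hcmul : (1 - (τ:ℝ)/(T:ℝ)) * (Real.logb 2 (1 + m1) + Real.logb 2 μ) ≤
      (1 - (τ:ℝ)/(T:ℝ)) * Real.logb 2 (1 + m2) :=
    mul_le_mul_of_nonneg_left (by linarith) hc0
  nlinarith

end muSide

section unSide

variable {U G : ℕ} {K : Fin G → ℕ} {N T : ℕ} {P : ℝ}
  {Emu : ∀ j : Fin G, Fin (K j) → ℝ} {β Eun α : Fin U → ℝ}

/-- The set whose `sSup` is `VunX`. -/
def SunS (N T : ℕ) (P : ℝ) (Emu : ∀ j : Fin G, Fin (K j) → ℝ) (β Eun α : Fin U → ℝ)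
    (s : ℝ) : Set ℝ :=
  {v : ℝ | ∃ (τ : ℕ) (qup : ∀ j : Fin G, Fin (K j) → ℝ) (qdl : Fin G → ℝ)
      (pup pdl : Fin U → ℝ),
    feasX T P Emu Eun τ qup qdl pup pdl ∧
    (∑ m, pdl m ≤ s) ∧ (∑ j, qdl j = P - s) ∧
    v = OunX N T β α τ pup pdl qdl}

lemma VunX_eq (η : ∀ j : Fin G, Fin (K j) → ℝ) (s : ℝ) :
    VunX N T P η Emu β Eun α s = sSup (SunS N T P Emu β Eun α s) := rfl

lemma Sun_elem_le (hT : 0 < T) (hβ : ∀ m, 0 < β m) (hα : ∀ m, 0 < α m)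
    {s v : ℝ} (hs : 0 ≤ s) (hv : v ∈ SunS N T P Emu β Eun α s) :
    0 ≤ v ∧ v ≤ ∑ m, α m * Real.logb 2 (1 + (N : ℝ) * β m * s) := by
  obtain ⟨τ, qup, qdl, pup, pdl, hfeas, hps, hqs, rfl⟩ := hv
  obtain ⟨hτ1, hτ2, hqdl, hpdl, hqup, hpup, htot⟩ := hfeas
  have hθ0 : ∀ m, 0 ≤ thetaX β τ pup m := thetaX_nonneg hβ fun m => (hpup m).1
  have hθle : ∀ m, thetaX β τ pup m ≤ β m := thetaX_le hβ fun m => (hpup m).1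
  have hq0 : (0:ℝ) ≤ ∑ j, qdl j := Finset.sum_nonneg fun j _ => hqdl j
  have hp0 : (0:ℝ) ≤ ∑ m, pdl m := Finset.sum_nonneg fun m _ => hpdl m
  obtain ⟨hc0, hc1⟩ := coefX hT hτ2
  have htm : ∀ m : Fin U, 0 ≤ (N : ℝ) * pdl m * thetaX β τ pup m /
      (1 + β m * (∑ u, pdl u + ∑ j, qdl j)) ∧
      (N : ℝ) * pdl m * thetaX β τ pup m /
      (1 + β m * (∑ u, pdl u + ∑ j, qdl j)) ≤ (N : ℝ) * β m * s := by
    intro m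
    have hβm := hβ m
    have hd1 : (1:ℝ) ≤ 1 + β m * (∑ u, pdl u + ∑ j, qdl j) := by nlinarith
    have hn0 : (0:ℝ) ≤ (N : ℝ) * pdl m * thetaX β τ pup m := by
      have := hpdl m; have := hθ0 m; positivity
    constructor
    · exact div_nonneg hn0 (by linarith)
    · refine (div_le_self hn0 hd1).trans ?_
      have hple : pdl m ≤ s :=
        le_trans (Finset.single_le_sum (fun i _ => hpdl i) (Finset.mem_univ m)) hps
      have hN0 : (0:ℝ) ≤ (N:ℝ) := Nat.cast_nonneg N
      have hmul : pdl m * thetaX β τ pup m ≤ s * β m :=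
        mul_le_mul hple (hθle m) (hθ0 m) hs
      calc (N:ℝ) * pdl m * thetaX β τ pup m
          = (N:ℝ) * (pdl m * thetaX β τ pup m) := by ring
        _ ≤ (N:ℝ) * (s * β m) := mul_le_mul_of_nonneg_left hmul hN0
        _ = (N:ℝ) * β m * s := by ring
  have hsum0 : 0 ≤ ∑ m, α m * Real.logb 2 (1 + (N : ℝ) * pdl m * thetaX β τ pup m /
      (1 + β m * (∑ u, pdl u + ∑ j, qdl j))) := by
    refine Finset.sum_nonneg fun m _ => mul_nonneg (hα m).le ?_
    exact Real.logb_nonneg one_lt_two (by linarith [(htm m).1])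
  have hsumle : (∑ m, α m * Real.logb 2 (1 + (N : ℝ) * pdl m * thetaX β τ pup m /
      (1 + β m * (∑ u, pdl u + ∑ j, qdl j)))) ≤
      ∑ m, α m * Real.logb 2 (1 + (N : ℝ) * β m * s) := by
    refine Finset.sum_le_sum fun m _ => mul_le_mul_of_nonneg_left ?_ (hα m).le
    refine Real.logb_le_logb_of_le one_lt_two (by linarith [(htm m).1]) ?_
    linarith [(htm m).2]
  have hrepr : OunX N T β α τ pup pdl qdl = (1 - (τ:ℝ)/(T:ℝ)) *
      ∑ m, α m * Real.logb 2 (1 + (N : ℝ) * pdl m * thetaX β τ pup m /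
      (1 + β m * (∑ u, pdl u + ∑ j, qdl j))) := rfl
  rw [hrepr]
  constructor
  · exact mul_nonneg hc0 hsum0
  · exact (mul_le_of_le_one_left hsum0 hc1).trans hsumle

lemma Sun_bddAbove (hT : 0 < T) (hβ : ∀ m, 0 < β m) (hα : ∀ m, 0 < α m)
    {s : ℝ} (hs : 0 ≤ s) : BddAbove (SunS N T P Emu β Eun α s) :=
  ⟨∑ m, α m * Real.logb 2 (1 + (N : ℝ) * β m * s),
    fun _ hv => (Sun_elem_le hT hβ hα hs hv).2⟩

lemma zero_mem_SunS (hU : 1 ≤ U) (hG : 1 ≤ G) (hUG : U + G ≤ T)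
    (hEmu : ∀ j k, 0 ≤ Emu j k) (hEun : ∀ m, 0 ≤ Eun m)
    {s : ℝ} (hs0 : 0 ≤ s) (hsP : s ≤ P) :
    (0:ℝ) ∈ SunS N T P Emu β Eun α s := by
  have hGpos : (0:ℝ) < (G:ℝ) := by exact_mod_cast hG
  have hsumq : ∑ _j : Fin G, (P - s)/(G:ℝ) = P - s := by
    rw [Finset.sum_const, Finset.card_fin, nsmul_eq_mul, mul_div_cancel₀ _ hGpos.ne']
  refine ⟨U + G, fun _ _ => 0, fun _ => (P - s)/(G:ℝ), fun _ => 0, fun _ => 0,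
    ⟨le_rfl, hUG, fun j => div_nonneg (by linarith) hGpos.le, fun m => le_rfl,
     fun j k => ⟨le_rfl, by simpa using hEmu j k⟩,
     fun m => ⟨le_rfl, by simpa using hEun m⟩, ?_⟩, by simpa using hs0, hsumq, ?_⟩
  · rw [hsumq]; simp; linarith
  · simp [OunX]

lemma Sun_pos (hU : 1 ≤ U) (hG : 1 ≤ G) (hN : 1 ≤ N) (hT : U + G < T)
    (hβ : ∀ m, 0 < β m) (hα : ∀ m, 0 < α m)
    (hEmu : ∀ j k, 0 ≤ Emu j k) (hEun : ∀ m, 0 < Eun m)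
    {s : ℝ} (h0 : 0 < s) (hsP : s ≤ P) :
    ∃ v ∈ SunS N T P Emu β Eun α s, 0 < v := by
  have hT1 : 1 ≤ T := by omega
  have hτ1 : 1 ≤ T - 1 := by omega
  have hτpos : (0:ℝ) < ((T-1:ℕ):ℝ) := by exact_mod_cast hτ1
  have hcast : ((T - 1 : ℕ) : ℝ) = (T:ℝ) - 1 := by
    rw [Nat.cast_sub hT1]; norm_num
  have hGpos : (0:ℝ) < (G:ℝ) := by exact_mod_cast hG
  have hUpos : (0:ℝ) < (U:ℝ) := by exact_mod_cast hU
  have hTpos : (0:ℝ) < (T:ℝ) := by exact_mod_cast (by omega : 0 < T)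
  set pup : Fin U → ℝ := fun m => Eun m / ((T-1:ℕ):ℝ) with hpups
  set pdl : Fin U → ℝ := fun _ => s / (U:ℝ) with hpdls
  set qdl : Fin G → ℝ := fun _ => (P - s)/(G:ℝ) with hqdls
  have hsump : ∑ m, pdl m = s := by
    rw [hpdls, Finset.sum_const, Finset.card_fin, nsmul_eq_mul, mul_div_cancel₀ _ hUpos.ne']
  have hsumq : ∑ j, qdl j = P - s := by
    rw [hqdls, Finset.sum_const, Finset.card_fin, nsmul_eq_mul, mul_div_cancel₀ _ hGpos.ne']
  have hfeas : feasX T P Emu Eun (T-1) (fun _ _ => 0) qdl pup pdl := by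
    refine ⟨by omega, by omega, fun j => div_nonneg (by linarith) hGpos.le,
      fun m => div_nonneg h0.le hUpos.le,
      fun j k => ⟨le_rfl, by simpa using hEmu j k⟩,
      fun m => ⟨div_nonneg (hEun m).le hτpos.le, ?_⟩, ?_⟩
    · rw [hpups, mul_div_cancel₀ _ hτpos.ne']
    · rw [hsump, hsumq]; linarith
  refine ⟨OunX N T β α (T-1) pup pdl qdl,
    ⟨T-1, fun _ _ => 0, qdl, pup, pdl, hfeas, le_of_eq hsump, hsumq, rfl⟩, ?_⟩
  have hc : 1 - ((T-1:ℕ):ℝ)/(T:ℝ) = 1/(T:ℝ) := by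
    rw [hcast]; field_simp; ring
  have hNpos : (0:ℝ) < (N:ℝ) := by exact_mod_cast hN
  have htot : ∑ u, pdl u + ∑ j, qdl j = P := by rw [hsump, hsumq]; ring
  have hterm : ∀ m : Fin U, 0 < (N : ℝ) * pdl m * thetaX β (T-1) pup m /
      (1 + β m * (∑ u, pdl u + ∑ j, qdl j)) := by
    intro m
    have hθ : 0 < thetaX β (T-1) pup m :=
      thetaX_pos hβ (fun m' => div_nonneg (hEun m').le hτpos.le) (by omega)
        (div_pos (hEun m) hτpos)
    have hpdlm : 0 < pdl m := div_pos h0 hUpos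
    have hd : 0 < 1 + β m * (∑ u, pdl u + ∑ j, qdl j) := by
      rw [htot]; have := hβ m; nlinarith
    exact div_pos (mul_pos (mul_pos hNpos hpdlm) hθ) hd
  have hrepr : OunX N T β α (T-1) pup pdl qdl = (1 - ((T-1:ℕ):ℝ)/(T:ℝ)) *
      ∑ m, α m * Real.logb 2 (1 + (N : ℝ) * pdl m * thetaX β (T-1) pup m /
      (1 + β m * (∑ u, pdl u + ∑ j, qdl j))) := rfl
  rw [hrepr, hc]
  refine mul_pos (by positivity) (Finset.sum_pos (fun m _ => ?_) ⟨⟨0, hU⟩, Finset.mem_univ _⟩)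
  exact mul_pos (hα m) (Real.logb_pos one_lt_two (by linarith [hterm m]))

set_option maxHeartbeats 1000000 in
lemma Sun_transfer_up (hT : 0 < T) (hβ : ∀ m, 0 < β m) (hα : ∀ m, 0 < α m)
    {s s' v : ℝ} (h0 : 0 < s) (hss' : s ≤ s') (hs'P : s' ≤ P)
    (hv : v ∈ SunS N T P Emu β Eun α s) :
    ∃ (τ : ℕ) (t : Fin U → ℝ), U + G ≤ τ ∧ τ ≤ T ∧ (∀ m, 0 ≤ t m) ∧
      v = (1 - (τ:ℝ)/(T:ℝ)) * ∑ m, α m * Real.logb 2 (1 + t m) ∧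
      ∃ v' ∈ SunS N T P Emu β Eun α s',
        (1 - (τ:ℝ)/(T:ℝ)) * ∑ m, α m * Real.logb 2 (1 + (s'/s) * t m) ≤ v' := by
  obtain ⟨τ, qup, qdl, pup, pdl, hfeas, hps, hqs, rfl⟩ := hv
  obtain ⟨hτ1, hτ2, hqdl, hpdl, hqup, hpup, htot⟩ := hfeas
  have hθ0 : ∀ m, 0 ≤ thetaX β τ pup m := thetaX_nonneg hβ fun m => (hpup m).1
  have hq0 : (0:ℝ) ≤ ∑ j, qdl j := Finset.sum_nonneg fun j _ => hqdl j
  have hp0 : (0:ℝ) ≤ ∑ m, pdl m := Finset.sum_nonneg fun m _ => hpdl m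
  obtain ⟨hc0, hc1⟩ := coefX hT hτ2
  set t : Fin U → ℝ := fun m => (N : ℝ) * pdl m * thetaX β τ pup m /
      (1 + β m * (∑ u, pdl u + ∑ j, qdl j)) with ht
  have ht0 : ∀ m, 0 ≤ t m := by
    intro m
    rw [ht]
    have hβm := hβ m
    have hn0 : (0:ℝ) ≤ (N : ℝ) * pdl m * thetaX β τ pup m := by
      have := hpdl m; have := hθ0 m; positivity
    exact div_nonneg hn0 (by nlinarith)
  have hrepr : OunX N T β α τ pup pdl qdl =
      (1 - (τ:ℝ)/(T:ℝ)) * ∑ m, α m * Real.logb 2 (1 + t m) := by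
    simp only [OunX, ht]
  refine ⟨τ, t, hτ1, hτ2, ht0, hrepr, ?_⟩
  rcases eq_or_lt_of_le hss' with rfl | hlt
  · refine ⟨OunX N T β α τ pup pdl qdl, ⟨τ, qup, qdl, pup, pdl,
      ⟨hτ1, hτ2, hqdl, hpdl, hqup, hpup, htot⟩, hps, hqs, rfl⟩, ?_⟩
    rw [hrepr]
    simp only [div_self h0.ne', one_mul]
    exact le_rfl
  · have hPs : 0 < P - s := by linarith
    set lam := s'/s with hlamdef
    have hlam1 : 1 ≤ lam := (one_le_div h0).2 hss'
    have hlam0 : 0 ≤ lam := by linarith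
    have hlams : lam * s = s' := div_mul_cancel₀ _ h0.ne'
    set pdl' : Fin U → ℝ := fun m => lam * pdl m with hpdl'def
    set qdl' : Fin G → ℝ := fun j => ((P - s')/(P - s)) * qdl j with hqdl'def
    have hsump' : ∑ m, pdl' m = lam * ∑ m, pdl m := by rw [hpdl'def, ← Finset.mul_sum]
    have hsumq' : ∑ j, qdl' j = P - s' := by
      rw [hqdl'def, ← Finset.mul_sum, hqs, div_mul_cancel₀ _ hPs.ne']
    have hp's' : ∑ m, pdl' m ≤ s' := by
      rw [hsump', ← hlams]; exact mul_le_mul_of_nonneg_left hps hlam0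
    have hfeas' : feasX T P Emu Eun τ qup qdl' pup pdl' := by
      refine ⟨hτ1, hτ2, fun j => mul_nonneg (div_nonneg (by linarith) hPs.le) (hqdl j),
        fun m => mul_nonneg hlam0 (hpdl m), hqup, hpup, ?_⟩
      rw [hsumq']; linarith [hp's']
    refine ⟨OunX N T β α τ pup pdl' qdl',
      ⟨τ, qup, qdl', pup, pdl', hfeas', hp's', hsumq', rfl⟩, ?_⟩
    set t' : Fin U → ℝ := fun m => (N : ℝ) * pdl' m * thetaX β τ pup m /
        (1 + β m * (∑ u, pdl' u + ∑ j, qdl' j)) with ht'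
    have hrepr' : OunX N T β α τ pup pdl' qdl' =
        (1 - (τ:ℝ)/(T:ℝ)) * ∑ m, α m * Real.logb 2 (1 + t' m) := by
      simp only [OunX, ht']
    have htot'le : ∑ u, pdl' u + ∑ j, qdl' j ≤ ∑ u, pdl u + ∑ j, qdl j := by
      rw [hsump', hsumq', hqs]
      nlinarith [hps, hlam1, hlams]
    have htot'0 : 0 ≤ ∑ u, pdl' u + ∑ j, qdl' j := by
      rw [hsump', hsumq']
      have := mul_nonneg hlam0 hp0
      linarith
    have hkey : ∀ m, lam * t m ≤ t' m := by
      intro m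
      simp only [ht, ht']
      have hβm := hβ m
      have hn0 : (0:ℝ) ≤ (N : ℝ) * pdl m * thetaX β τ pup m := by
        have := hpdl m; have := hθ0 m; positivity
      have hnum : lam * ((N : ℝ) * pdl m * thetaX β τ pup m) =
          (N : ℝ) * pdl' m * thetaX β τ pup m := by
        simp only [hpdl'def]; ring
      have hd'pos : 0 < 1 + β m * (∑ u, pdl' u + ∑ j, qdl' j) := by nlinarith
      have hdle : 1 + β m * (∑ u, pdl' u + ∑ j, qdl' j) ≤
          1 + β m * (∑ u, pdl u + ∑ j, qdl j) := by nlinarith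
      calc lam * ((N : ℝ) * pdl m * thetaX β τ pup m /
            (1 + β m * (∑ u, pdl u + ∑ j, qdl j)))
          = ((N : ℝ) * pdl' m * thetaX β τ pup m) /
            (1 + β m * (∑ u, pdl u + ∑ j, qdl j)) := by
            rw [← hnum]; exact (mul_div_assoc _ _ _).symm
        _ ≤ ((N : ℝ) * pdl' m * thetaX β τ pup m) /
            (1 + β m * (∑ u, pdl' u + ∑ j, qdl' j)) := by
            refine div_le_div_of_nonneg_left ?_ hd'pos hdle
            rw [← hnum]; exact mul_nonneg hlam0 hn0
    rw [hrepr']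
    refine mul_le_mul_of_nonneg_left ?_ hc0
    refine Finset.sum_le_sum fun m _ => ?_
    refine mul_le_mul_of_nonneg_left ?_ (hα m).le
    refine Real.logb_le_logb_of_le one_lt_two ?_ (by linarith [hkey m])
    nlinarith [mul_nonneg hlam0 (ht0 m)]

set_option maxHeartbeats 1000000 in
lemma Sun_transfer_down (hU : 1 ≤ U) (hG : 1 ≤ G) (hT : 0 < T)
    (hβ : ∀ m, 0 < β m) (hα : ∀ m, 0 < α m)
    {C : ℝ} (hC : ∀ m, β m ≤ C) (hC0 : 0 ≤ C)
    {s s' v' : ℝ} (h0 : 0 < s) (hss' : s ≤ s') (hs'P : s' ≤ P)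
    (hv' : v' ∈ SunS N T P Emu β Eun α s') :
    ∃ v ∈ SunS N T P Emu β Eun α s,
      v' + (∑ m, α m) * Real.logb 2 ((s/s') / (1 + C * (s' - s))) ≤ v := by
  obtain ⟨τ, qup, qdl', pup, pdl', hfeas, hps', hqs', rfl⟩ := hv'
  obtain ⟨hτ1, hτ2, hqdl', hpdl', hqup, hpup, htot'⟩ := hfeas
  have hs'0 : 0 < s' := lt_of_lt_of_le h0 hss'
  have hθ0 : ∀ m, 0 ≤ thetaX β τ pup m := thetaX_nonneg hβ fun m => (hpup m).1
  have hq0 : (0:ℝ) ≤ ∑ j, qdl' j := Finset.sum_nonneg fun j _ => hqdl' j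
  have hp0 : (0:ℝ) ≤ ∑ m, pdl' m := Finset.sum_nonneg fun m _ => hpdl' m
  obtain ⟨hc0, hc1⟩ := coefX hT hτ2
  have hGpos : (0:ℝ) < (G:ℝ) := by exact_mod_cast hG
  set Δ := s' - s with hΔdef
  have hΔ0 : 0 ≤ Δ := by rw [hΔdef]; linarith
  have hden : (0:ℝ) < 1 + C * Δ := by nlinarith
  have hss'1 : s / s' ≤ 1 := (div_le_one hs'0).2 hss'
  set μ := (s/s') / (1 + C * Δ) with hμdef
  have hμ0 : 0 < μ := div_pos (div_pos h0 hs'0) hden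
  have hμ1 : μ ≤ 1 := by rw [hμdef, div_le_one hden]; nlinarith
  set pdl : Fin U → ℝ := fun m => (s/s') * pdl' m with hpdldef
  set qdl : Fin G → ℝ := fun _ => (P - s)/(G:ℝ) with hqdldef
  have hsdiv0 : (0:ℝ) ≤ s / s' := div_nonneg h0.le hs'0.le
  have hsump : ∑ m, pdl m = (s/s') * ∑ m, pdl' m := by rw [hpdldef, ← Finset.mul_sum]
  have hpsle : ∑ m, pdl m ≤ s := by
    rw [hsump]
    calc (s/s') * ∑ m, pdl' m ≤ (s/s') * s' := mul_le_mul_of_nonneg_left hps' hsdiv0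
      _ = s := div_mul_cancel₀ _ hs'0.ne'
  have hsumq : ∑ j, qdl j = P - s := by
    rw [hqdldef, Finset.sum_const, Finset.card_fin, nsmul_eq_mul,
      mul_div_cancel₀ _ hGpos.ne']
  have hfeas2 : feasX T P Emu Eun τ qup qdl pup pdl := by
    refine ⟨hτ1, hτ2, fun j => div_nonneg (by linarith) hGpos.le,
      fun m => mul_nonneg hsdiv0 (hpdl' m), hqup, hpup, ?_⟩
    rw [hsumq]; linarith [hpsle]
  refine ⟨OunX N T β α τ pup pdl qdl, ⟨τ, qup, qdl, pup, pdl, hfeas2, hpsle, hsumq, rfl⟩, ?_⟩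
  set t' : Fin U → ℝ := fun m => (N : ℝ) * pdl' m * thetaX β τ pup m /
      (1 + β m * (∑ u, pdl' u + ∑ j, qdl' j)) with ht'
  set t : Fin U → ℝ := fun m => (N : ℝ) * pdl m * thetaX β τ pup m /
      (1 + β m * (∑ u, pdl u + ∑ j, qdl j)) with ht
  have hrepr1 : OunX N T β α τ pup pdl' qdl' =
      (1 - (τ:ℝ)/(T:ℝ)) * ∑ m, α m * Real.logb 2 (1 + t' m) := by
    simp only [OunX, ht']
  have hrepr2 : OunX N T β α τ pup pdl qdl =
      (1 - (τ:ℝ)/(T:ℝ)) * ∑ m, α m * Real.logb 2 (1 + t m) := by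
    simp only [OunX, ht]
  have ht'0 : ∀ m, 0 ≤ t' m := by
    intro m
    simp only [ht']
    have hβm := hβ m
    have hn0 : (0:ℝ) ≤ (N : ℝ) * pdl' m * thetaX β τ pup m := by
      have := hpdl' m; have := hθ0 m; positivity
    exact div_nonneg hn0 (by nlinarith)
  have htotnew : ∑ u, pdl u + ∑ j, qdl j ≤ (∑ u, pdl' u + ∑ j, qdl' j) + Δ := by
    rw [hsump, hsumq, hqs', hΔdef]
    nlinarith [hp0, hss'1]
  have htotnew0 : 0 ≤ ∑ u, pdl u + ∑ j, qdl j := by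
    rw [hsump, hsumq]
    have := mul_nonneg hsdiv0 hp0
    linarith
  have hkey : ∀ m, μ * t' m ≤ t m := by
    intro m
    simp only [ht, ht']
    have hβm := hβ m
    have hβC := hC m
    have hdd' : 0 < 1 + β m * (∑ u, pdl' u + ∑ j, qdl' j) := by nlinarith
    have hdd : 0 < 1 + β m * (∑ u, pdl u + ∑ j, qdl j) := by nlinarith
    have hcompare : 1 + β m * (∑ u, pdl u + ∑ j, qdl j) ≤
        (1 + C * Δ) * (1 + β m * (∑ u, pdl' u + ∑ j, qdl' j)) := by
      have h1 : β m * (∑ u, pdl u + ∑ j, qdl j) ≤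
          β m * ((∑ u, pdl' u + ∑ j, qdl' j) + Δ) :=
        mul_le_mul_of_nonneg_left htotnew hβm.le
      have h2 : β m * Δ ≤ C * Δ := mul_le_mul_of_nonneg_right hβC hΔ0
      have h3 : 0 ≤ C * Δ * (β m * (∑ u, pdl' u + ∑ j, qdl' j)) := by
        have h4 : 0 ≤ β m * (∑ u, pdl' u + ∑ j, qdl' j) :=
          mul_nonneg hβm.le (by linarith)
        exact mul_nonneg (mul_nonneg hC0 hΔ0) h4
      nlinarith
    have hnum : (s/s') * ((N : ℝ) * pdl' m * thetaX β τ pup m) =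
        (N : ℝ) * pdl m * thetaX β τ pup m := by
      simp only [hpdldef]; ring
    have hn0' : 0 ≤ (N:ℝ) * pdl' m * thetaX β τ pup m := by
      have := hpdl' m; have := hθ0 m; positivity
    calc μ * ((N : ℝ) * pdl' m * thetaX β τ pup m /
          (1 + β m * (∑ u, pdl' u + ∑ j, qdl' j)))
        = ((N : ℝ) * pdl m * thetaX β τ pup m) /
          ((1 + C * Δ) * (1 + β m * (∑ u, pdl' u + ∑ j, qdl' j))) := by
          rw [hμdef, div_mul_div_comm, hnum]
      _ ≤ ((N : ℝ) * pdl m * thetaX β τ pup m) /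
          (1 + β m * (∑ u, pdl u + ∑ j, qdl j)) := by
          refine div_le_div_of_nonneg_left ?_ hdd hcompare
          rw [← hnum]; exact mul_nonneg hsdiv0 hn0'
  rw [hrepr1, hrepr2]
  have hμlog : Real.logb 2 μ ≤ 0 := Real.logb_nonpos one_lt_two hμ0.le hμ1
  have hA0 : 0 ≤ ∑ m, α m := Finset.sum_nonneg fun m _ => (hα m).le
  have hsumkey : (∑ m, α m * Real.logb 2 (1 + t' m)) + (∑ m, α m) * Real.logb 2 μ ≤
      ∑ m, α m * Real.logb 2 (1 + t m) := by
    rw [Finset.sum_mul, ← Finset.sum_add_distrib]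
    refine Finset.sum_le_sum fun m _ => ?_
    have h1 : Real.logb 2 (1 + t' m) + Real.logb 2 μ ≤ Real.logb 2 (1 + μ * t' m) :=
      logb2_mul_ge hμ0 hμ1 (ht'0 m)
    have h2 : Real.logb 2 (1 + μ * t' m) ≤ Real.logb 2 (1 + t m) := by
      refine Real.logb_le_logb_of_le one_lt_two ?_ (by linarith [hkey m])
      nlinarith [mul_nonneg hμ0.le (ht'0 m)]
    calc α m * Real.logb 2 (1 + t' m) + α m * Real.logb 2 μ
        = α m * (Real.logb 2 (1 + t' m) + Real.logb 2 μ) := by ring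
      _ ≤ α m * Real.logb 2 (1 + t m) := mul_le_mul_of_nonneg_left (by linarith) (hα m).le
  have hfin : (1 - (τ:ℝ)/(T:ℝ)) * ((∑ m, α m * Real.logb 2 (1 + t' m)) +
      (∑ m, α m) * Real.logb 2 μ) ≤
      (1 - (τ:ℝ)/(T:ℝ)) * ∑ m, α m * Real.logb 2 (1 + t m) :=
    mul_le_mul_of_nonneg_left hsumkey hc0
  rw [mul_add] at hfin
  have hneg : (∑ m, α m) * Real.logb 2 μ ≤ 0 := mul_nonpos_of_nonneg_of_nonpos hA0 hμlog
  have h4 : (∑ m, α m) * Real.logb 2 μ ≤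
      (1 - (τ:ℝ)/(T:ℝ)) * ((∑ m, α m) * Real.logb 2 μ) := by nlinarith
  linarith

end unSide




set_option maxHeartbeats 1000000 in
lemma contOn_of_gap {f : ℝ → ℝ} {P C A B : ℝ} (hP : 0 < P) (hC0 : 0 ≤ C)
    (hA0 : 0 < A) (hB0 : 0 ≤ B)
    (hmono : ∀ a ∈ Set.Icc (0:ℝ) P, ∀ b ∈ Set.Icc (0:ℝ) P, a ≤ b → f a ≤ f b)
    (hgap : ∀ a b : ℝ, 0 < a → a ≤ b → b ≤ P →
      f b ≤ f a + A * Real.logb 2 ((b/a)*(1+C*(b-a))))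
    (hzero : ∀ y ∈ Set.Icc (0:ℝ) P, f y - f 0 ≤ B * y) :
    ContinuousOn f (Set.Icc 0 P) := by
  intro x hx
  rw [Metric.continuousWithinAt_iff]
  intro ε hε
  rcases eq_or_lt_of_le hx.1 with hx0 | hx0
  · -- x = 0
    refine ⟨ε/(B+1), by positivity, fun y hy hdist => ?_⟩
    rw [Real.dist_eq] at hdist ⊢
    rw [← hx0] at hdist ⊢
    have hy0 : 0 ≤ y := hy.1
    have habs : y < ε/(B+1) := by
      have h := abs_lt.1 hdist; linarith [h.1, h.2]
    have h0mem : (0:ℝ) ∈ Set.Icc (0:ℝ) P := ⟨le_rfl, hP.le⟩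
    have h1 : f 0 ≤ f y := hmono 0 h0mem y hy hy0
    have hkey : B * y < ε := by
      have h2 : B * y ≤ B * (ε/(B+1)) := mul_le_mul_of_nonneg_left habs.le hB0
      have hd : (0:ℝ) < B + 1 := by positivity
      have he : (B+1)*(ε/(B+1)) = ε := mul_div_cancel₀ _ hd.ne'
      have hdp : 0 < ε/(B+1) := div_pos hε hd
      nlinarith
    rw [abs_of_nonneg (by linarith)]
    linarith [hzero y hy]
  · -- x > 0
    have hQpos : (0:ℝ) < 8*A*(1+C*x)+1 := by positivity
    refine ⟨min (x/2) (ε*x/(8*A*(1+C*x)+1)),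
      lt_min (half_pos hx0) (div_pos (mul_pos hε hx0) hQpos), fun y hy hdist => ?_⟩
    rw [Real.dist_eq] at hdist ⊢
    have hd1 : |y - x| < x/2 := lt_of_lt_of_le hdist (min_le_left _ _)
    have hd2 : |y - x| < ε*x/(8*A*(1+C*x)+1) := lt_of_lt_of_le hdist (min_le_right _ _)
    have habs1 := abs_lt.1 hd1
    have habs2 := abs_lt.1 hd2
    rcases le_total y x with hc | hc
    · -- y ≤ x ; a = y, b = x
      have hy0 : 0 < y := by linarith [habs1.1]
      have hyhalf : x/2 ≤ y := by linarith [habs1.1]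
      have hΔ0 : 0 ≤ x - y := by linarith
      have hΔQ : (x - y) * (8*A*(1+C*x)+1) < ε * x := by
        rw [← lt_div_iff₀ hQpos]
        linarith [habs2.1]
      have hgap1 := hgap y x hy0 hc hx.2
      have hmono1 := hmono y hy x hx hc
      have hE1 : (1:ℝ) ≤ (x/y)*(1+C*(x-y)) := by
        have h1 : (1:ℝ) ≤ x/y := (one_le_div hy0).2 hc
        nlinarith [mul_nonneg hC0 hΔ0]
      have hlb := logb2_le_two_mul hE1
      have hfrac : (x/y)*(1+C*(x-y)) - 1 = ((x-y)*(1+C*x))/y := by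
        field_simp; ring
      have hW0 : 0 ≤ A*((x-y)*(1+C*x)) := by positivity
      have h3 : 8*(A*((x-y)*(1+C*x))) < ε*x := by nlinarith [hΔQ, hΔ0]
      have h4 : ε*x ≤ 2*(ε*y) := by nlinarith [mul_nonneg hε.le (by linarith : (0:ℝ) ≤ 2*y - x)]
      have hεy : 0 < ε*y := mul_pos hε hy0
      have hkey : A * (2*(((x-y)*(1+C*x))/y)) < ε := by
        have heq : A * (2*(((x-y)*(1+C*x))/y)) = (2*(A*((x-y)*(1+C*x))))/y := by
          field_simp
        rw [heq, div_lt_iff₀ hy0]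
        linarith
      rw [abs_of_nonpos (by linarith)]
      have hA2 : A * Real.logb 2 ((x/y)*(1+C*(x-y))) ≤
          A * (2*((x/y)*(1+C*(x-y)) - 1)) :=
        mul_le_mul_of_nonneg_left hlb hA0.le
      rw [hfrac] at hA2
      linarith
    · -- x ≤ y : a = x, b = y
      have hy32 : y ≤ 3*x/2 := by linarith [habs1.2]
      have hΔ0 : 0 ≤ y - x := by linarith
      have hΔQ : (y - x) * (8*A*(1+C*x)+1) < ε * x := by
        rw [← lt_div_iff₀ hQpos]
        linarith [habs2.2]
      have hgap1 := hgap x y hx0 hc hy.2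
      have hmono1 := hmono x hx y hy hc
      have hE1 : (1:ℝ) ≤ (y/x)*(1+C*(y-x)) := by
        have h1 : (1:ℝ) ≤ y/x := (one_le_div hx0).2 hc
        nlinarith [mul_nonneg hC0 hΔ0]
      have hlb := logb2_le_two_mul hE1
      have hfrac : (y/x)*(1+C*(y-x)) - 1 = ((y-x)*(1+C*y))/x := by
        field_simp; ring
      have h5 : C*y ≤ (3/2)*(C*x) := by nlinarith [mul_le_mul_of_nonneg_left hy32 hC0]
      have h6 : (0:ℝ) ≤ 1/2 + (3/2)*(C*x) - C*y := by linarith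
      have h7 : 0 ≤ (y-x) * (1/2 + (3/2)*(C*x) - C*y) := mul_nonneg hΔ0 h6
      have hW : (y-x)*(1+C*y) ≤ (3/2)*((y-x)*(1+C*x)) := by nlinarith [h7]
      have h3 : 8*(A*((y-x)*(1+C*x))) < ε*x := by nlinarith [hΔQ, hΔ0]
      have hεx : 0 < ε*x := mul_pos hε hx0
      have hAW : A*((y-x)*(1+C*y)) ≤ (3/2)*(A*((y-x)*(1+C*x))) := by
        have := mul_le_mul_of_nonneg_left hW hA0.le
        linarith [this]
      have hW0 : 0 ≤ A*((y-x)*(1+C*x)) := by positivity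
      have hkey : A * (2*(((y-x)*(1+C*y))/x)) < ε := by
        have heq : A * (2*(((y-x)*(1+C*y))/x)) = (2*(A*((y-x)*(1+C*y))))/x := by
          field_simp
        rw [heq, div_lt_iff₀ hx0]
        linarith
      rw [abs_of_nonneg (by linarith)]
      have hA2 : A * Real.logb 2 ((y/x)*(1+C*(y-x))) ≤
          A * (2*((y/x)*(1+C*(y-x)) - 1)) :=
        mul_le_mul_of_nonneg_left hlb hA0.le
      rw [hfrac] at hA2
      linarith

set_option maxHeartbeats 2000000 in
/-- if `U+G < T`, the value functions `V_mu` and `V_un` are strictly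
increasing and continuous on `[0,P]`. -/
theorem moop_value_functions_strictMono_continuous
    (U G : ℕ) (hU : 1 ≤ U) (hG : 1 ≤ G) (K : Fin G → ℕ) (hK : ∀ j, 1 ≤ K j)
    (N : ℕ) (hN : 1 ≤ N) (T : ℕ) (hT : U + G < T)
    (P : ℝ) (hP : 0 < P)
    (η Emu : ∀ j : Fin G, Fin (K j) → ℝ) (β Eun α : Fin U → ℝ)
    (hη : ∀ j k, 0 < η j k) (hEmu : ∀ j k, 0 < Emu j k)
    (hβ : ∀ m, 0 < β m) (hEun : ∀ m, 0 < Eun m) (hα : ∀ m, 0 < α m) :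
    StrictMonoOn (VmuX N T P η Emu β Eun α) (Set.Icc (0 : ℝ) P) ∧
    ContinuousOn (VmuX N T P η Emu β Eun α) (Set.Icc (0 : ℝ) P) ∧
    StrictMonoOn (VunX N T P η Emu β Eun α) (Set.Icc (0 : ℝ) P) ∧
    ContinuousOn (VunX N T P η Emu β Eun α) (Set.Icc (0 : ℝ) P) := by
  classical
  have hT0 : 0 < T := by omega
  have hUG : U + G ≤ T := hT.le
  have hTpos : (0:ℝ) < (T:ℝ) := by exact_mod_cast hT0
  have hEmu0 : ∀ j k, 0 ≤ Emu j k := fun j k => (hEmu j k).le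
  have hEun0 : ∀ m, 0 ≤ Eun m := fun m => (hEun m).le
  haveI : Nonempty (Fin U) := ⟨⟨0, hU⟩⟩
  haveI : Nonempty (Fin G) := ⟨⟨0, hG⟩⟩
  haveI : Nonempty ((j : Fin G) × Fin (K j)) := ⟨⟨⟨0, hG⟩, ⟨0, hK _⟩⟩⟩
  obtain ⟨p0, hp0⟩ := Finite.exists_max (fun p : (j : Fin G) × Fin (K j) => η p.1 p.2)
  have hC : ∀ j k, η j k ≤ η p0.1 p0.2 := fun j k => hp0 ⟨j, k⟩
  have hC0 : 0 ≤ η p0.1 p0.2 := (hη _ _).le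
  obtain ⟨mβ, hmβ⟩ := Finite.exists_max β
  have hCβ : ∀ m, β m ≤ β mβ := hmβ
  have hCβ0 : 0 ≤ β mβ := (hβ mβ).le
  have hApos : 0 < ∑ m, α m :=
    Finset.sum_pos (fun m _ => hα m) ⟨⟨0, hU⟩, Finset.mem_univ _⟩
  have hN0 : (0:ℝ) ≤ (N:ℝ) := Nat.cast_nonneg N
  -- # mu : monotonicity
  have hmuV0 : ∀ s : ℝ, 0 ≤ s → s ≤ P → sSup (SmuS N T P η Emu Eun s) ≤
      Real.logb 2 (1 + (N:ℝ) * η ⟨0,hG⟩ ⟨0, hK ⟨0,hG⟩⟩ * s) := by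
    intro s hs0 hsP
    exact csSup_le ⟨0, zero_mem_SmuS hU hG hK hUG hEmu0 hEun0 hs0 hsP⟩
      fun v hv => (Smu_elem_le hG hK hT0 hη hs0 hv ⟨0,hG⟩ ⟨0, hK ⟨0,hG⟩⟩).2
  have hmuzero' : ∀ s : ℝ, s = 0 → 0 ≤ s → s ≤ P →
      sSup (SmuS N T P η Emu Eun s) ≤ 0 := by
    intro s hseq hs0 hsP
    subst hseq
    simpa using hmuV0 0 le_rfl hP.le
  have hmumono : ∀ a ∈ Set.Icc (0:ℝ) P, ∀ b ∈ Set.Icc (0:ℝ) P, a ≤ b →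
      VmuX N T P η Emu β Eun α a ≤ VmuX N T P η Emu β Eun α b := by
    intro a ha b hb hab
    rw [VmuX_eq, VmuX_eq]
    rcases eq_or_lt_of_le ha.1 with ha0 | ha0
    · refine (hmuzero' a ha0.symm ha.1 ha.2).trans ?_
      exact le_csSup (Smu_bddAbove hG hK hT0 hη hb.1)
        (zero_mem_SmuS hU hG hK hUG hEmu0 hEun0 hb.1 hb.2)
    · refine csSup_le ⟨0, zero_mem_SmuS hU hG hK hUG hEmu0 hEun0 ha.1 ha.2⟩
        fun v hv => ?_
      obtain ⟨τ, m1, hτ1, hτ2, hm10, hveq, v', hv', hineq⟩ :=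
        Smu_transfer_up hG hK hT0 hη ha0 hab hb.2 hv
      have h1 : v ≤ (1 - (τ:ℝ)/(T:ℝ)) * Real.logb 2 (1 + (b/a) * m1) := by
        rw [hveq]
        refine mul_le_mul_of_nonneg_left ?_ (coefX hT0 hτ2).1
        refine Real.logb_le_logb_of_le one_lt_two (by linarith) ?_
        have hlam1 : 1 ≤ b/a := (one_le_div ha0).2 hab
        nlinarith
      exact h1.trans (hineq.trans
        (le_csSup (Smu_bddAbove hG hK hT0 hη (le_trans ha.1 hab)) hv'))
  -- # mu : gap bound
  have hmugap : ∀ a b : ℝ, 0 < a → a ≤ b → b ≤ P →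
      VmuX N T P η Emu β Eun α b ≤ VmuX N T P η Emu β Eun α a +
        1 * Real.logb 2 ((b/a)*(1 + η p0.1 p0.2 * (b-a))) := by
    intro a b ha hab hbP
    rw [VmuX_eq, VmuX_eq]
    have hb0 : (0:ℝ) ≤ b := le_trans ha.le hab
    refine csSup_le ⟨0, zero_mem_SmuS hU hG hK hUG hEmu0 hEun0 hb0 hbP⟩
      fun v' hv' => ?_
    obtain ⟨v, hv, hineq⟩ :=
      Smu_transfer_down hU hG hK hT0 hη hC hC0 ha hab hbP hv'
    have h1 : v ≤ sSup (SmuS N T P η Emu Eun a) :=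
      le_csSup (Smu_bddAbove hG hK hT0 hη ha.le) hv
    have hΔ0 : (0:ℝ) ≤ b - a := by linarith
    have hdenpos : (0:ℝ) < 1 + η p0.1 p0.2 * (b-a) := by
      nlinarith [mul_nonneg hC0 hΔ0]
    have h2 : Real.logb 2 ((a/b)/(1 + η p0.1 p0.2 * (b-a))) =
        - Real.logb 2 ((b/a)*(1 + η p0.1 p0.2 * (b-a))) := by
      rw [show (a/b)/(1 + η p0.1 p0.2 * (b-a)) =
          ((b/a)*(1 + η p0.1 p0.2 * (b-a)))⁻¹ by
        field_simp]
      exact Real.logb_inv _ _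
    rw [h2] at hineq
    linarith
  -- # mu : linear bound near 0
  have hmuzero : ∀ y ∈ Set.Icc (0:ℝ) P,
      VmuX N T P η Emu β Eun α y - VmuX N T P η Emu β Eun α 0 ≤
        (2*(N:ℝ)* η p0.1 p0.2) * y := by
    intro y hy
    have h1 : (0:ℝ) ≤ VmuX N T P η Emu β Eun α 0 := by
      rw [VmuX_eq]
      exact le_csSup (Smu_bddAbove hG hK hT0 hη le_rfl)
        (zero_mem_SmuS hU hG hK hUG hEmu0 hEun0 le_rfl hP.le)
    have h2 : VmuX N T P η Emu β Eun α y ≤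
        Real.logb 2 (1 + (N:ℝ) * η ⟨0,hG⟩ ⟨0, hK ⟨0,hG⟩⟩ * y) := by
      rw [VmuX_eq]; exact hmuV0 y hy.1 hy.2
    have hn0 : (0:ℝ) ≤ (N:ℝ) * η ⟨0,hG⟩ ⟨0, hK ⟨0,hG⟩⟩ * y :=
      mul_nonneg (mul_nonneg hN0 (hη _ _).le) hy.1
    have h3 := logb2_le_two_mul (t := 1 + (N:ℝ) * η ⟨0,hG⟩ ⟨0, hK ⟨0,hG⟩⟩ * y)
      (by linarith)
    have h4 : (N:ℝ) * η ⟨0,hG⟩ ⟨0, hK ⟨0,hG⟩⟩ * y ≤ (N:ℝ) * η p0.1 p0.2 * y := by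
      have h5 := mul_nonneg (mul_nonneg hN0
        (sub_nonneg.2 (hC ⟨0,hG⟩ ⟨0, hK ⟨0,hG⟩⟩))) hy.1
      nlinarith
    nlinarith
  -- # mu : continuity
  have hmucont : ContinuousOn (VmuX N T P η Emu β Eun α) (Set.Icc 0 P) :=
    contOn_of_gap hP hC0 one_pos
      (by positivity : (0:ℝ) ≤ 2*(N:ℝ)* η p0.1 p0.2) hmumono hmugap hmuzero
  -- # mu : strict monotonicity
  have hmustrict : StrictMonoOn (VmuX N T P η Emu β Eun α) (Set.Icc 0 P) := by
    intro s1 hs1 s2 hs2 hlt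
    have hs20 : 0 < s2 := lt_of_le_of_lt hs1.1 hlt
    have hbdd2 := Smu_bddAbove (N := N) (P := P) (Emu := Emu) (Eun := Eun)
      hG hK hT0 hη hs20.le
    obtain ⟨w2, hw2, hw2pos⟩ := Smu_pos hU hG hK hN hT hη hEmu hEun0 hs20 hs2.2
    rcases eq_or_lt_of_le hs1.1 with h10 | h10
    · rw [VmuX_eq, VmuX_eq]
      have hle := hmuzero' s1 h10.symm hs1.1 hs1.2
      have h2 : 0 < sSup (SmuS N T P η Emu Eun s2) :=
        lt_of_lt_of_le hw2pos (le_csSup hbdd2 hw2)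
      linarith
    · rw [VmuX_eq, VmuX_eq]
      have hbdd1 := Smu_bddAbove (N := N) (P := P) (Emu := Emu) (Eun := Eun)
        hG hK hT0 hη h10.le
      obtain ⟨w1, hw1, hw1pos⟩ := Smu_pos hU hG hK hN hT hη hEmu hEun0 h10 hs1.2
      set v0 := sSup (SmuS N T P η Emu Eun s1) with hv0def
      have hv0pos : 0 < v0 := lt_of_lt_of_le hw1pos (le_csSup hbdd1 hw1)
      have hlam : 1 < s2/s1 := (one_lt_div h10).2 hlt
      have hm₁pos : 0 < (2:ℝ)^(v0/2) - 1 := by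
        have h1 : (1:ℝ) < (2:ℝ)^(v0/2) :=
          (Real.one_lt_rpow_iff_of_pos (by norm_num)).2
            (Or.inl ⟨one_lt_two, by positivity⟩)
        linarith
      set δ := (1/(T:ℝ)) * (Real.logb 2 (1+(s2/s1)*((2:ℝ)^(v0/2) - 1)) -
        Real.logb 2 (1+((2:ℝ)^(v0/2) - 1))) with hδdef
      have hδpos : 0 < δ :=
        mul_pos (by positivity) (logb2_gap_pos hlam hm₁pos)
      have hclaim : ∀ ε : ℝ, 0 < ε → ε < v0/2 →
          v0 - ε + δ ≤ sSup (SmuS N T P η Emu Eun s2) := by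
        intro ε hεpos hεlt
        obtain ⟨v, hv, hvgt⟩ := exists_lt_of_lt_csSup ⟨w1, hw1⟩
          (by linarith : v0 - ε < sSup (SmuS N T P η Emu Eun s1))
        obtain ⟨τ, m1, hτ1, hτ2, hm10, hveq, v', hv', hineq⟩ :=
          Smu_transfer_up hG hK hT0 hη h10 hlt.le hs2.2 hv
        obtain ⟨hc0, hc1⟩ := coefX hT0 hτ2
        have hvpos : 0 < v := by linarith
        have hL0 : 0 ≤ Real.logb 2 (1+m1) :=
          Real.logb_nonneg one_lt_two (by linarith)
        have hcpos : 0 < 1 - (τ:ℝ)/(T:ℝ) := by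
          rcases lt_or_ge 0 (1 - (τ:ℝ)/(T:ℝ)) with h | h
          · exact h
          · exfalso
            have h6 : (1 - (τ:ℝ)/(T:ℝ)) * Real.logb 2 (1+m1) ≤ 0 :=
              mul_nonpos_of_nonpos_of_nonneg h hL0
            rw [← hveq] at h6
            linarith
        have hτltT : τ < T := by
          by_contra hcon
          push_neg at hcon
          have heq : τ = T := le_antisymm hτ2 hcon
          rw [heq, div_self hTpos.ne'] at hcpos
          linarith
        have hcge : 1/(T:ℝ) ≤ 1 - (τ:ℝ)/(T:ℝ) := by
          have h5 : (τ:ℝ) + 1 ≤ (T:ℝ) := by exact_mod_cast hτltT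
          have h6 : ((τ:ℝ)+1)/(T:ℝ) ≤ 1 := (div_le_one hTpos).2 h5
          have h7 : 1/(T:ℝ) + (τ:ℝ)/(T:ℝ) = ((τ:ℝ)+1)/(T:ℝ) := by ring
          linarith
        have hLge : v ≤ Real.logb 2 (1+m1) := by
          rw [hveq]; exact mul_le_of_le_one_left hL0 hc1
        have hm1ge : (2:ℝ)^(v0/2) - 1 ≤ m1 := by
          have h7 : v0/2 < Real.logb 2 (1+m1) := by linarith
          have h8 : (2:ℝ)^(v0/2) < 1 + m1 :=
            (Real.lt_logb_iff_rpow_lt one_lt_two (by linarith)).1 h7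
          linarith
        have hgap := logb2_gap_mono hlam.le hm₁pos.le hm1ge
        have hgap0 := (logb2_gap_pos hlam hm₁pos).le
        have h12 : 0 ≤ Real.logb 2 (1+(s2/s1)*m1) - Real.logb 2 (1+m1) := by
          linarith
        have h11 : δ ≤ (1 - (τ:ℝ)/(T:ℝ)) *
            (Real.logb 2 (1+(s2/s1)*m1) - Real.logb 2 (1+m1)) := by
          rw [hδdef]
          calc (1/(T:ℝ)) * (Real.logb 2 (1+(s2/s1)*((2:ℝ)^(v0/2) - 1)) -
              Real.logb 2 (1+((2:ℝ)^(v0/2) - 1)))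
              ≤ (1/(T:ℝ)) * (Real.logb 2 (1+(s2/s1)*m1) - Real.logb 2 (1+m1)) :=
                mul_le_mul_of_nonneg_left hgap (by positivity)
            _ ≤ (1 - (τ:ℝ)/(T:ℝ)) *
                (Real.logb 2 (1+(s2/s1)*m1) - Real.logb 2 (1+m1)) :=
                mul_le_mul_of_nonneg_right hcge h12
        have h13 : (1 - (τ:ℝ)/(T:ℝ)) * Real.logb 2 (1 + (s2/s1) * m1) =
            (1 - (τ:ℝ)/(T:ℝ)) * Real.logb 2 (1+m1) +
            (1 - (τ:ℝ)/(T:ℝ)) *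
              (Real.logb 2 (1+(s2/s1)*m1) - Real.logb 2 (1+m1)) := by ring
        have h14 : v' ≤ sSup (SmuS N T P η Emu Eun s2) := le_csSup hbdd2 hv'
        have h15 : v + δ ≤ (1 - (τ:ℝ)/(T:ℝ)) * Real.logb 2 (1 + (s2/s1) * m1) := by
          rw [hveq]
          linarith
        linarith
      have hεv : 0 < min (v0/4) (δ/2) := lt_min (by linarith) (by linarith)
      have hεlt : min (v0/4) (δ/2) < v0/2 :=
        lt_of_le_of_lt (min_le_left _ _) (by linarith)
      have hfin := hclaim _ hεv hεlt
      have hminδ : min (v0/4) (δ/2) ≤ δ/2 := min_le_right _ _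
      linarith
  -- # un : monotonicity
  have hunV0 : ∀ s : ℝ, 0 ≤ s → s ≤ P → sSup (SunS N T P Emu β Eun α s) ≤
      ∑ m, α m * Real.logb 2 (1 + (N:ℝ) * β m * s) := by
    intro s hs0 hsP
    exact csSup_le ⟨0, zero_mem_SunS hU hG hUG hEmu0 hEun0 hs0 hsP⟩
      fun v hv => (Sun_elem_le hT0 hβ hα hs0 hv).2
  have hunzero' : ∀ s : ℝ, s = 0 → 0 ≤ s → s ≤ P →
      sSup (SunS N T P Emu β Eun α s) ≤ 0 := by
    intro s hseq hs0 hsP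
    subst hseq
    simpa using hunV0 0 le_rfl hP.le
  have hunmono : ∀ a ∈ Set.Icc (0:ℝ) P, ∀ b ∈ Set.Icc (0:ℝ) P, a ≤ b →
      VunX N T P η Emu β Eun α a ≤ VunX N T P η Emu β Eun α b := by
    intro a ha b hb hab
    rw [VunX_eq, VunX_eq]
    rcases eq_or_lt_of_le ha.1 with ha0 | ha0
    · refine (hunzero' a ha0.symm ha.1 ha.2).trans ?_
      exact le_csSup (Sun_bddAbove hT0 hβ hα hb.1)
        (zero_mem_SunS hU hG hUG hEmu0 hEun0 hb.1 hb.2)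
    · refine csSup_le ⟨0, zero_mem_SunS hU hG hUG hEmu0 hEun0 ha.1 ha.2⟩
        fun v hv => ?_
      obtain ⟨τ, t, hτ1, hτ2, ht0, hveq, v', hv', hineq⟩ :=
        Sun_transfer_up hT0 hβ hα ha0 hab hb.2 hv
      have h1 : v ≤ (1 - (τ:ℝ)/(T:ℝ)) * ∑ m, α m * Real.logb 2 (1 + (b/a) * t m) := by
        rw [hveq]
        refine mul_le_mul_of_nonneg_left (Finset.sum_le_sum fun m _ => ?_)
          (coefX hT0 hτ2).1
        refine mul_le_mul_of_nonneg_left ?_ (hα m).le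
        refine Real.logb_le_logb_of_le one_lt_two (by linarith [ht0 m]) ?_
        have hlam1 : 1 ≤ b/a := (one_le_div ha0).2 hab
        nlinarith [ht0 m]
      exact h1.trans (hineq.trans
        (le_csSup (Sun_bddAbove hT0 hβ hα (le_trans ha.1 hab)) hv'))
  -- # un : gap bound
  have hungap : ∀ a b : ℝ, 0 < a → a ≤ b → b ≤ P →
      VunX N T P η Emu β Eun α b ≤ VunX N T P η Emu β Eun α a +
        (∑ m, α m) * Real.logb 2 ((b/a)*(1 + β mβ * (b-a))) := by
    intro a b ha hab hbP
    rw [VunX_eq, VunX_eq]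
    have hb0 : (0:ℝ) ≤ b := le_trans ha.le hab
    refine csSup_le ⟨0, zero_mem_SunS hU hG hUG hEmu0 hEun0 hb0 hbP⟩
      fun v' hv' => ?_
    obtain ⟨v, hv, hineq⟩ :=
      Sun_transfer_down hU hG hT0 hβ hα hCβ hCβ0 ha hab hbP hv'
    have h1 : v ≤ sSup (SunS N T P Emu β Eun α a) :=
      le_csSup (Sun_bddAbove hT0 hβ hα ha.le) hv
    have hΔ0 : (0:ℝ) ≤ b - a := by linarith
    have hdenpos : (0:ℝ) < 1 + β mβ * (b-a) := by
      nlinarith [mul_nonneg hCβ0 hΔ0]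
    have h2 : Real.logb 2 ((a/b)/(1 + β mβ * (b-a))) =
        - Real.logb 2 ((b/a)*(1 + β mβ * (b-a))) := by
      rw [show (a/b)/(1 + β mβ * (b-a)) = ((b/a)*(1 + β mβ * (b-a)))⁻¹ by
        field_simp]
      exact Real.logb_inv _ _
    rw [h2, mul_neg] at hineq
    linarith
  -- # un : linear bound near 0
  have hunzero : ∀ y ∈ Set.Icc (0:ℝ) P,
      VunX N T P η Emu β Eun α y - VunX N T P η Emu β Eun α 0 ≤
        (2*(N:ℝ)* ∑ m, α m * β m) * y := by
    intro y hy
    have h1 : (0:ℝ) ≤ VunX N T P η Emu β Eun α 0 := by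
      rw [VunX_eq]
      exact le_csSup (Sun_bddAbove hT0 hβ hα le_rfl)
        (zero_mem_SunS hU hG hUG hEmu0 hEun0 le_rfl hP.le)
    have h2 : VunX N T P η Emu β Eun α y ≤
        ∑ m, α m * Real.logb 2 (1 + (N:ℝ) * β m * y) := by
      rw [VunX_eq]; exact hunV0 y hy.1 hy.2
    have h3 : (∑ m, α m * Real.logb 2 (1 + (N:ℝ) * β m * y)) ≤
        ∑ m, α m * (2*((N:ℝ) * β m * y)) := by
      refine Finset.sum_le_sum fun m _ => mul_le_mul_of_nonneg_left ?_ (hα m).le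
      have hn0 : (0:ℝ) ≤ (N:ℝ) * β m * y :=
        mul_nonneg (mul_nonneg hN0 (hβ m).le) hy.1
      have h4 := logb2_le_two_mul (t := 1 + (N:ℝ) * β m * y) (by linarith)
      linarith
    have h5 : (∑ m, α m * (2*((N:ℝ) * β m * y))) =
        (2*(N:ℝ)* ∑ m, α m * β m) * y := by
      calc (∑ m, α m * (2*((N:ℝ) * β m * y)))
          = ∑ m, (2*(N:ℝ)*y) * (α m * β m) :=
            Finset.sum_congr rfl fun m _ => by ring
        _ = (2*(N:ℝ)*y) * ∑ m, α m * β m := by rw [← Finset.mul_sum]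
        _ = (2*(N:ℝ)* ∑ m, α m * β m) * y := by ring
    linarith
  -- # un : continuity
  have huncont : ContinuousOn (VunX N T P η Emu β Eun α) (Set.Icc 0 P) := by
    refine contOn_of_gap hP hCβ0 hApos ?_ hunmono hungap hunzero
    have : (0:ℝ) ≤ ∑ m, α m * β m :=
      Finset.sum_nonneg fun m _ => mul_nonneg (hα m).le (hβ m).le
    positivity
  -- # un : strict monotonicity
  have hunstrict : StrictMonoOn (VunX N T P η Emu β Eun α) (Set.Icc 0 P) := by
    intro s1 hs1 s2 hs2 hlt
    have hs20 : 0 < s2 := lt_of_le_of_lt hs1.1 hlt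
    have hbdd2 := Sun_bddAbove (N := N) (P := P) (Emu := Emu) (β := β) (Eun := Eun)
      (α := α) hT0 hβ hα hs20.le
    obtain ⟨w2, hw2, hw2pos⟩ := Sun_pos hU hG hN hT hβ hα hEmu0 hEun hs20 hs2.2
    rcases eq_or_lt_of_le hs1.1 with h10 | h10
    · rw [VunX_eq, VunX_eq]
      have hle := hunzero' s1 h10.symm hs1.1 hs1.2
      have h2 : 0 < sSup (SunS N T P Emu β Eun α s2) :=
        lt_of_lt_of_le hw2pos (le_csSup hbdd2 hw2)
      linarith
    · rw [VunX_eq, VunX_eq]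
      have hbdd1 := Sun_bddAbove (N := N) (P := P) (Emu := Emu) (β := β) (Eun := Eun)
        (α := α) hT0 hβ hα h10.le
      obtain ⟨w1, hw1, hw1pos⟩ := Sun_pos hU hG hN hT hβ hα hEmu0 hEun h10 hs1.2
      set v0 := sSup (SunS N T P Emu β Eun α s1) with hv0def
      have hv0pos : 0 < v0 := lt_of_lt_of_le hw1pos (le_csSup hbdd1 hw1)
      have hlam : 1 < s2/s1 := (one_lt_div h10).2 hlt
      obtain ⟨mα, hmα⟩ := Finite.exists_min α
      set t₁ := (2:ℝ)^(v0/(2*∑ m, α m)) - 1 with ht₁def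
      have ht₁pos : 0 < t₁ := by
        have h1 : (1:ℝ) < (2:ℝ)^(v0/(2*∑ m, α m)) :=
          (Real.one_lt_rpow_iff_of_pos (by norm_num)).2
            (Or.inl ⟨one_lt_two, by positivity⟩)
        rw [ht₁def]; linarith
      set δ := (1/(T:ℝ)) * (α mα * (Real.logb 2 (1+(s2/s1)*t₁) -
        Real.logb 2 (1+t₁))) with hδdef
      have hδpos : 0 < δ :=
        mul_pos (by positivity) (mul_pos (hα mα) (logb2_gap_pos hlam ht₁pos))
      have hclaim : ∀ ε : ℝ, 0 < ε → ε < v0/2 →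
          v0 - ε + δ ≤ sSup (SunS N T P Emu β Eun α s2) := by
        intro ε hεpos hεlt
        obtain ⟨v, hv, hvgt⟩ := exists_lt_of_lt_csSup ⟨w1, hw1⟩
          (by linarith : v0 - ε < sSup (SunS N T P Emu β Eun α s1))
        obtain ⟨τ, t, hτ1, hτ2, ht0, hveq, v', hv', hineq⟩ :=
          Sun_transfer_up hT0 hβ hα h10 hlt.le hs2.2 hv
        obtain ⟨hc0, hc1⟩ := coefX hT0 hτ2
        have hvpos : 0 < v := by linarith
        have hL0 : 0 ≤ ∑ m, α m * Real.logb 2 (1+t m) :=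
          Finset.sum_nonneg fun m _ => mul_nonneg (hα m).le
            (Real.logb_nonneg one_lt_two (by linarith [ht0 m]))
        have hcpos : 0 < 1 - (τ:ℝ)/(T:ℝ) := by
          rcases lt_or_ge 0 (1 - (τ:ℝ)/(T:ℝ)) with h | h
          · exact h
          · exfalso
            have h6 : (1 - (τ:ℝ)/(T:ℝ)) * ∑ m, α m * Real.logb 2 (1+t m) ≤ 0 :=
              mul_nonpos_of_nonpos_of_nonneg h hL0
            rw [← hveq] at h6
            linarith
        have hτltT : τ < T := by
          by_contra hcon
          push_neg at hcon
          have heq : τ = T := le_antisymm hτ2 hcon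
          rw [heq, div_self hTpos.ne'] at hcpos
          linarith
        have hcge : 1/(T:ℝ) ≤ 1 - (τ:ℝ)/(T:ℝ) := by
          have h5 : (τ:ℝ) + 1 ≤ (T:ℝ) := by exact_mod_cast hτltT
          have h6 : ((τ:ℝ)+1)/(T:ℝ) ≤ 1 := (div_le_one hTpos).2 h5
          have h7 : 1/(T:ℝ) + (τ:ℝ)/(T:ℝ) = ((τ:ℝ)+1)/(T:ℝ) := by ring
          linarith
        have hLge : v ≤ ∑ m, α m * Real.logb 2 (1+t m) := by
          rw [hveq]; exact mul_le_of_le_one_left hL0 hc1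
        obtain ⟨mt, hmt⟩ := Finite.exists_max t
        have hLle : (∑ m, α m * Real.logb 2 (1+t m)) ≤
            (∑ m, α m) * Real.logb 2 (1+t mt) := by
          rw [Finset.sum_mul]
          refine Finset.sum_le_sum fun m _ => mul_le_mul_of_nonneg_left ?_ (hα m).le
          exact Real.logb_le_logb_of_le one_lt_two (by linarith [ht0 m])
            (by linarith [hmt m])
        have hlogmt : v0/(2*∑ m, α m) < Real.logb 2 (1+t mt) := by
          have h8 : v0/2 < (∑ m, α m) * Real.logb 2 (1+t mt) := by linarith
          rw [div_lt_iff₀ (by positivity : (0:ℝ) < 2*∑ m, α m)]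
          nlinarith
        have ht1le : t₁ ≤ t mt := by
          have h9 : (2:ℝ)^(v0/(2*∑ m, α m)) < 1 + t mt :=
            (Real.lt_logb_iff_rpow_lt one_lt_two (by linarith [ht0 mt])).1 hlogmt
          rw [ht₁def]; linarith
        have hgapm := logb2_gap_mono hlam.le ht₁pos.le ht1le
        have hbr0 : 0 ≤ Real.logb 2 (1+(s2/s1)*t mt) - Real.logb 2 (1+t mt) := by
          linarith [(logb2_gap_pos hlam ht₁pos).le]
        have hsumgap : α mα * (Real.logb 2 (1+(s2/s1)*t mt) -
            Real.logb 2 (1+t mt)) ≤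
            (∑ m, α m * Real.logb 2 (1+(s2/s1)*t m)) -
              ∑ m, α m * Real.logb 2 (1+t m) := by
          rw [← Finset.sum_sub_distrib]
          have hterm : ∀ m ∈ Finset.univ, 0 ≤ α m * Real.logb 2 (1+(s2/s1)*t m) -
              α m * Real.logb 2 (1+t m) := by
            intro m _
            have hmono2 : Real.logb 2 (1+t m) ≤ Real.logb 2 (1+(s2/s1)*t m) := by
              refine Real.logb_le_logb_of_le one_lt_two (by linarith [ht0 m]) ?_
              nlinarith [ht0 m]
            have := mul_le_mul_of_nonneg_left hmono2 (hα m).le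
            linarith
          refine le_trans ?_ (Finset.single_le_sum hterm (Finset.mem_univ mt))
          calc α mα * (Real.logb 2 (1+(s2/s1)*t mt) - Real.logb 2 (1+t mt))
              ≤ α mt * (Real.logb 2 (1+(s2/s1)*t mt) - Real.logb 2 (1+t mt)) :=
                mul_le_mul_of_nonneg_right (hmα mt) hbr0
            _ = α mt * Real.logb 2 (1+(s2/s1)*t mt) -
                α mt * Real.logb 2 (1+t mt) := by ring
        have h11 : δ ≤ (1 - (τ:ℝ)/(T:ℝ)) *
            ((∑ m, α m * Real.logb 2 (1+(s2/s1)*t m)) -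
              ∑ m, α m * Real.logb 2 (1+t m)) := by
          have h12 : α mα * (Real.logb 2 (1+(s2/s1)*t₁) - Real.logb 2 (1+t₁)) ≤
              α mα * (Real.logb 2 (1+(s2/s1)*t mt) - Real.logb 2 (1+t mt)) :=
            mul_le_mul_of_nonneg_left hgapm (hα mα).le
          have h13 : 0 ≤ (∑ m, α m * Real.logb 2 (1+(s2/s1)*t m)) -
              ∑ m, α m * Real.logb 2 (1+t m) := by
            refine le_trans ?_ hsumgap
            exact mul_nonneg (hα mα).le hbr0
          rw [hδdef]
          calc (1/(T:ℝ)) * (α mα * (Real.logb 2 (1+(s2/s1)*t₁) -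
              Real.logb 2 (1+t₁)))
              ≤ (1/(T:ℝ)) * ((∑ m, α m * Real.logb 2 (1+(s2/s1)*t m)) -
                ∑ m, α m * Real.logb 2 (1+t m)) := by
                refine mul_le_mul_of_nonneg_left ?_ (by positivity)
                exact le_trans h12 hsumgap
            _ ≤ (1 - (τ:ℝ)/(T:ℝ)) * ((∑ m, α m * Real.logb 2 (1+(s2/s1)*t m)) -
                ∑ m, α m * Real.logb 2 (1+t m)) :=
                mul_le_mul_of_nonneg_right hcge h13
        have h14 : v' ≤ sSup (SunS N T P Emu β Eun α s2) := le_csSup hbdd2 hv'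
        have h13' : (1 - (τ:ℝ)/(T:ℝ)) * (∑ m, α m * Real.logb 2 (1+(s2/s1)*t m)) =
            (1 - (τ:ℝ)/(T:ℝ)) * (∑ m, α m * Real.logb 2 (1+t m)) +
            (1 - (τ:ℝ)/(T:ℝ)) * ((∑ m, α m * Real.logb 2 (1+(s2/s1)*t m)) -
              ∑ m, α m * Real.logb 2 (1+t m)) := by ring
        have h15 : v + δ ≤ (1 - (τ:ℝ)/(T:ℝ)) *
            ∑ m, α m * Real.logb 2 (1+(s2/s1)*t m) := by
          rw [hveq]
          linarith
        linarith
      have hεv : 0 < min (v0/4) (δ/2) := lt_min (by linarith) (by linarith)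
      have hεlt : min (v0/4) (δ/2) < v0/2 :=
        lt_of_le_of_lt (min_le_left _ _) (by linarith)
      have hfin := hclaim _ hεv hεlt
      have hminδ : min (v0/4) (δ/2) ≤ δ/2 := min_le_right _ _
      linarith
  exact ⟨hmustrict, hmucont, hunstrict, huncont⟩
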